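/- arXiv:0812.2421 — 7 statements merged into one kernel-verified Lean document; each statement's English description precedes it below -/
import Mathlib

section
/- Let μ be a Borel measure on ℝ^m, s > 0, j a nonnegative integer with j < s, and M, C₂, ν > 0. Suppose μ(B(x,r)) ≤ M r^s for all x ∈ ℝ^m and r > 0 (polynomial growth), and suppose F ⊂ B(x₀, r) is a set with μ(F) ≥ C₂ r^s such that every point of F lies within distance νr of some fixed j-dimensional affine subspace L. Then C₂ ≤ C(m) M ν^{s−j}, where C(m) depends only on m; in particular, if ν is sufficiently small (depending only on m, s, j, C₂, M) this is impossible. -/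
open MeasureTheory Metric Set Filter
open scoped ENNReal NNReal

private lemma sep_card (d : ℕ) {R ε : ℝ} (hε : 0 < ε) (hεR : ε ≤ R)
    (T : Finset (EuclideanSpace ℝ (Fin d)))
    (hT : ∀ t ∈ T, ‖t‖ ≤ R)
    (hsep : ∀ x ∈ T, ∀ y ∈ T, x ≠ y → ε ≤ dist x y) :
    (T.card : ℝ) ≤ (3 * R / ε) ^ d := by
  set B := volume (ball (0 : EuclideanSpace ℝ (Fin d)) 1) with hB
  have hB0 : B ≠ 0 := (measure_ball_pos volume _ one_pos).ne'
  have hBtop : B ≠ ⊤ := measure_ball_lt_top.ne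
  have hε2 : (0:ℝ) < ε / 2 := by linarith
  have hdisj : (T : Set (EuclideanSpace ℝ (Fin d))).Pairwise
      (Function.onFun Disjoint fun t => ball t (ε / 2)) := by
    intro x hx y hy hxy
    exact ball_disjoint_ball (by linarith [hsep x hx y hy hxy])
  have hsub : (⋃ t ∈ T, ball t (ε / 2)) ⊆ ball (0 : EuclideanSpace ℝ (Fin d)) (R + ε / 2) := by
    intro x hx
    simp only [mem_iUnion, exists_prop] at hx
    obtain ⟨t, ht, hxt⟩ := hx
    have := hT t ht
    rw [mem_ball] at hxt ⊢
    have h1 : dist x 0 ≤ dist x t + dist t 0 := dist_triangle _ _ _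
    rw [dist_zero_right, dist_zero_right] at h1
    rw [dist_zero_right]
    linarith
  have key : (T.card : ℝ≥0∞) * volume (ball (0 : EuclideanSpace ℝ (Fin d)) (ε / 2))
      ≤ volume (ball (0 : EuclideanSpace ℝ (Fin d)) (R + ε / 2)) := by
    have h1 : ∑ t ∈ T, volume (ball t (ε / 2))
        = (T.card : ℝ≥0∞) * volume (ball (0 : EuclideanSpace ℝ (Fin d)) (ε / 2)) := by
      rw [Finset.sum_congr rfl fun t _ => Measure.addHaar_ball_center volume t (ε/2),
        Finset.sum_const, nsmul_eq_mul]
    rw [← h1, ← measure_biUnion_finset hdisj fun t _ => measurableSet_ball]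
    exact measure_mono hsub
  rw [Measure.addHaar_ball_of_pos volume _ hε2,
    Measure.addHaar_ball_of_pos volume _ (by linarith : (0:ℝ) < R + ε/2),
    finrank_euclideanSpace_fin] at key
  have hpos1 : (0:ℝ) < (ε / 2) ^ d := pow_pos hε2 d
  have hpos2 : (0:ℝ) < (R + ε / 2) / (ε / 2) := div_pos (by linarith) hε2
  have key2 : (T.card : ℝ≥0∞) * ENNReal.ofReal ((ε / 2) ^ d) ≤ ENNReal.ofReal ((R + ε / 2) ^ d) :=
    (ENNReal.mul_le_mul_iff_left hB0 hBtop).1 (by rwa [← mul_assoc] at key)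
  -- rewrite RHS as ofReal (ratio) * ofReal ((ε/2)^d)
  have hratio : (R + ε / 2) ^ d = ((R + ε / 2) / (ε / 2)) ^ d * (ε / 2) ^ d := by
    rw [← mul_pow, div_mul_cancel₀ _ hε2.ne']
  have key3 : (T.card : ℝ≥0∞) * ENNReal.ofReal ((ε / 2) ^ d)
      ≤ ENNReal.ofReal (((R + ε / 2) / (ε / 2)) ^ d) * ENNReal.ofReal ((ε / 2) ^ d) := by
    rw [← ENNReal.ofReal_mul (pow_nonneg hpos2.le d), ← hratio]; exact key2
  have key4 : (T.card : ℝ≥0∞) ≤ ENNReal.ofReal (((R + ε / 2) / (ε / 2)) ^ d) :=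
    (ENNReal.mul_le_mul_iff_left (ENNReal.ofReal_pos.2 hpos1).ne' ENNReal.ofReal_ne_top).1 key3
  have key5 : (T.card : ℝ) ≤ ((R + ε / 2) / (ε / 2)) ^ d := by
    rw [← ENNReal.ofReal_natCast, ENNReal.ofReal_le_ofReal_iff (pow_nonneg hpos2.le d)] at key4
    exact key4
  refine key5.trans (pow_le_pow_left₀ hpos2.le ?_ d)
  rw [div_le_div_iff₀ hε2 hε]
  nlinarith

private lemma euclidean_cover (d : ℕ) {R ε : ℝ} (hε : 0 < ε) (hεR : ε ≤ R) :
    ∃ T : Finset (EuclideanSpace ℝ (Fin d)),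
      ((T.card : ℝ) ≤ (3 * R / ε) ^ d) ∧
      closedBall (0 : EuclideanSpace ℝ (Fin d)) R ⊆ ⋃ t ∈ T, ball t ε := by
  classical
  set P : ℕ → Prop := fun n => ∃ T : Finset (EuclideanSpace ℝ (Fin d)),
    T.card = n ∧ (∀ t ∈ T, ‖t‖ ≤ R) ∧ (∀ x ∈ T, ∀ y ∈ T, x ≠ y → ε ≤ dist x y) with hP
  have hbound : ∀ n, P n → n ≤ Nat.floor ((3 * R / ε) ^ d) := by
    intro n ⟨T, hc, hT, hsep⟩
    have := sep_card d hε hεR T hT hsep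
    rw [hc] at this
    exact Nat.le_floor this
  set N := Nat.floor ((3 * R / ε) ^ d)
  have h0 : P 0 := ⟨∅, by simp⟩
  have hmax : P (Nat.findGreatest P N) := Nat.findGreatest_spec (Nat.zero_le N) h0
  obtain ⟨T, hc, hT, hsep⟩ := hmax
  refine ⟨T, ?_, ?_⟩
  · have : T.card ≤ N := hc ▸ Nat.findGreatest_le N
    calc (T.card : ℝ) ≤ (N : ℝ) := Nat.cast_le.2 this
      _ ≤ (3 * R / ε) ^ d := Nat.floor_le (pow_nonneg (div_nonneg (by linarith) hε.le) d)
  · intro x hx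
    rw [mem_closedBall, dist_zero_right] at hx
    by_contra hcov
    simp only [mem_iUnion, exists_prop, not_exists, not_and, mem_ball] at hcov
    have hxT : x ∉ T := fun hxT => by
      have := hcov x hxT
      simp at this
      linarith [dist_self x, hε]
    have hP' : P (T.card + 1) := by
      refine ⟨insert x T, by rw [Finset.card_insert_of_notMem hxT], ?_, ?_⟩
      · intro t ht
        rcases Finset.mem_insert.1 ht with h | h
        · exact h ▸ hx
        · exact hT t h
      · intro a ha b hb hab
        rcases Finset.mem_insert.1 ha with h | h <;> rcases Finset.mem_insert.1 hb with h' | h'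
        · exact absurd (h.trans h'.symm) hab
        · subst h; exact not_lt.1 (hcov b h')
        · subst h'; exact not_lt.1 fun hlt => hcov a h (by rwa [dist_comm] at hlt)
        · exact hsep a h b h' hab
    have h1 : T.card + 1 ≤ N := hbound _ hP'
    have h2 : Nat.findGreatest P N < T.card + 1 := by omega
    exact Nat.findGreatest_is_greatest h2 h1 hP'

set_option maxHeartbeats  2000000 in
/-- If a set of measure `≥ C₂ r^s` inside a ball of radius `r` lies within distance `ν r`
of a `j`-dimensional affine subspace, and `μ` has growth `μ(B(x,t)) ≤ M t^s`, then
`C₂ ≤ C(m) M ν^{s-j}`. -/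
theorem flat_concentration_bound (m : ℕ) :
    ∃ C : ℝ, 0 < C ∧
      ∀ (s : ℝ) (j : ℕ) (M C₂ ν : ℝ)
        (μ : Measure (EuclideanSpace ℝ (Fin m)))
        (x₀ : EuclideanSpace ℝ (Fin m)) (r : ℝ)
        (F : Set (EuclideanSpace ℝ (Fin m)))
        (L : AffineSubspace ℝ (EuclideanSpace ℝ (Fin m))),
        0 < s → (j : ℝ) < s → 0 < M → 0 < C₂ → 0 < ν → 0 < r →
        (L : Set (EuclideanSpace ℝ (Fin m))).Nonempty →
        Module.finrank ℝ L.direction = j →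
        (∀ (x : EuclideanSpace ℝ (Fin m)) (t : ℝ), 0 < t →
          μ (ball x t) ≤ ENNReal.ofReal (M * t ^ s)) →
        F ⊆ ball x₀ r →
        ENNReal.ofReal (C₂ * r ^ s) ≤ μ F →
        (∀ y ∈ F, Metric.infDist y (L : Set (EuclideanSpace ℝ (Fin m))) ≤ ν * r) →
        C₂ ≤ C * M * ν ^ (s - (j : ℝ)) := by
  classical
  refine ⟨24 ^ m, by positivity, ?_⟩
  intro s j M C₂ ν μ x₀ r F L hs hjs hM hC₂ hν hr hLne hdim hgrowth hFsub hμF hFnear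
  have hrs : (0:ℝ) < r ^ s := Real.rpow_pos_of_pos hr s
  -- trivial bound C₂ ≤ M
  have hC₂M : C₂ ≤ M := by
    have h1 : ENNReal.ofReal (C₂ * r ^ s) ≤ ENNReal.ofReal (M * r ^ s) :=
      hμF.trans ((measure_mono hFsub).trans (hgrowth x₀ r hr))
    have h2 : C₂ * r ^ s ≤ M * r ^ s := by
      rwa [ENNReal.ofReal_le_ofReal_iff (mul_nonneg hM.le hrs.le)] at h1
    exact le_of_mul_le_mul_right h2 hrs
  have hjm : j ≤ m := by
    have h := Submodule.finrank_le L.direction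
    rwa [hdim, finrank_euclideanSpace_fin] at h
  have h24 : (1:ℝ) ≤ 24 ^ m := one_le_pow₀ (by norm_num)
  rcases le_or_gt 1 ν with hν1 | hν1
  · -- case ν ≥ 1
    have h1 : (1:ℝ) ≤ ν ^ (s - (j:ℝ)) :=
      Real.one_le_rpow hν1 (by linarith)
    nlinarith [mul_le_mul h24 h1 zero_le_one (by positivity : (0:ℝ) ≤ (24:ℝ)^m)]
  rcases le_or_gt s m with hsm | hsm
  · -- main case : ν < 1, s ≤ m
    -- F is nonempty
    have hCrs : (0:ℝ≥0∞) < ENNReal.ofReal (C₂ * r ^ s) := ENNReal.ofReal_pos.2 (by positivity)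
    have hFne : F.Nonempty := by
      rcases F.eq_empty_or_nonempty with h | h
      · exfalso; rw [h, measure_empty] at hμF; exact (hCrs.trans_le hμF).ne' rfl
      · exact h
    have hLclosed : IsClosed (L : Set (EuclideanSpace ℝ (Fin m))) :=
      L.closed_of_finiteDimensional
    -- a base point on L near the ball
    obtain ⟨y₀, hy₀F⟩ := hFne
    obtain ⟨p₀, hp₀L, hp₀d⟩ := hLclosed.exists_infDist_eq_dist hLne y₀
    have hp₀ : dist y₀ p₀ ≤ ν * r := hp₀d ▸ hFnear y₀ hy₀F
    set V := L.direction with hV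
    set d := Module.finrank ℝ V with hd
    have hdj : d = j := hdim
    set e := (stdOrthonormalBasis ℝ V).repr with he
    have hνr : (0:ℝ) < ν * r := by positivity
    obtain ⟨T, hcard, hcov⟩ := euclidean_cover d hνr (by nlinarith : ν * r ≤ 4 * r)
    -- F is covered by balls of radius 2νr around translated centers
    have hFcov : F ⊆ ⋃ t ∈ T, ball (p₀ + (e.symm t : EuclideanSpace ℝ (Fin m))) (2 * (ν * r)) := by
      intro y hy
      obtain ⟨p, hpL, hpd⟩ := hLclosed.exists_infDist_eq_dist hLne y
      have hyp : dist y p ≤ ν * r := hpd ▸ hFnear y hy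
      have hyx₀ : dist y x₀ < r := mem_ball.1 (hFsub hy)
      have hy₀x₀ : dist y₀ x₀ < r := mem_ball.1 (hFsub hy₀F)
      have hpp₀ : dist p p₀ ≤ 4 * r := by
        have h1 : dist p p₀ ≤ dist p y + dist y y₀ + dist y₀ p₀ := dist_triangle4 p y y₀ p₀
        have h2 : dist y y₀ ≤ dist y x₀ + dist y₀ x₀ := by
          have := dist_triangle y x₀ y₀
          rw [dist_comm x₀ y₀] at this
          exact this
        have h3 : dist p y = dist y p := dist_comm p y
        nlinarith
      have hvV : p -ᵥ p₀ ∈ V := AffineSubspace.vsub_mem_direction hpL hp₀L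
      rw [vsub_eq_sub] at hvV
      set w : V := ⟨p - p₀, hvV⟩ with hw
      have hwn : ‖w‖ ≤ 4 * r := by
        have h1 : ‖w‖ = dist p p₀ := by
          rw [show ‖w‖ = ‖p - p₀‖ from rfl, dist_eq_norm]
        rw [h1]; exact hpp₀
      have hew : e w ∈ closedBall (0 : EuclideanSpace ℝ (Fin d)) (4 * r) := by
        rw [mem_closedBall_zero_iff, e.norm_map]; exact hwn
      obtain ⟨t, htT, htd⟩ : ∃ t ∈ T, e w ∈ ball t (ν * r) := by
        have := hcov hew; simpa [mem_iUnion] using this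
      rw [mem_ball] at htd
      have hdist : dist w (e.symm t) < ν * r := by
        have h5 := e.symm.dist_map (e w) t
        rw [e.symm_apply_apply] at h5
        rw [h5]; exact htd
      have hdist2 : dist p (p₀ + (e.symm t : EuclideanSpace ℝ (Fin m))) < ν * r := by
        rw [dist_eq_norm, sub_add_eq_sub_sub]
        have : p - p₀ - (e.symm t : EuclideanSpace ℝ (Fin m))
            = ((w - e.symm t : V) : EuclideanSpace ℝ (Fin m)) := by
          simp [hw]
        rw [this]
        have : ‖((w - e.symm t : V) : EuclideanSpace ℝ (Fin m))‖ = ‖w - e.symm t‖ := rfl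
        rw [this, ← dist_eq_norm]
        exact hdist
      simp only [mem_iUnion, exists_prop]
      refine ⟨t, htT, ?_⟩
      rw [mem_ball]
      have h4 := dist_triangle y p (p₀ + (e.symm t : EuclideanSpace ℝ (Fin m)))
      linarith
    -- measure estimate
    have hmeas : ENNReal.ofReal (C₂ * r ^ s)
        ≤ ENNReal.ofReal ((3 * (4 * r) / (ν * r)) ^ d * (M * (2 * (ν * r)) ^ s)) := by
      refine hμF.trans ?_
      calc μ F ≤ μ (⋃ t ∈ T, ball (p₀ + (e.symm t : EuclideanSpace ℝ (Fin m))) (2 * (ν * r))) :=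
            measure_mono hFcov
        _ ≤ ∑ t ∈ T, μ (ball (p₀ + (e.symm t : EuclideanSpace ℝ (Fin m))) (2 * (ν * r))) :=
            measure_biUnion_finset_le T _
        _ ≤ ∑ _t ∈ T, ENNReal.ofReal (M * (2 * (ν * r)) ^ s) :=
            Finset.sum_le_sum fun t _ => hgrowth _ _ (by positivity)
        _ = (T.card : ℝ≥0∞) * ENNReal.ofReal (M * (2 * (ν * r)) ^ s) := by
            rw [Finset.sum_const, nsmul_eq_mul]
        _ ≤ ENNReal.ofReal ((3 * (4 * r) / (ν * r)) ^ d) * ENNReal.ofReal (M * (2 * (ν * r)) ^ s) := by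
            gcongr
            rw [← ENNReal.ofReal_natCast]
            exact ENNReal.ofReal_le_ofReal hcard
        _ = ENNReal.ofReal ((3 * (4 * r) / (ν * r)) ^ d * (M * (2 * (ν * r)) ^ s)) := by
            rw [← ENNReal.ofReal_mul (by positivity)]
    have hreal : C₂ * r ^ s ≤ (3 * (4 * r) / (ν * r)) ^ d * (M * (2 * (ν * r)) ^ s) := by
      rw [ENNReal.ofReal_le_ofReal_iff (by positivity)] at hmeas
      exact hmeas
    -- algebra
    have hq : 3 * (4 * r) / (ν * r) = 12 / ν := by
      field_simp
      ring
    have h2νr : (2 * (ν * r)) ^ s = 2 ^ s * (ν ^ s * r ^ s) := by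
      rw [Real.mul_rpow (by norm_num) (by positivity), Real.mul_rpow hν.le hr.le]
    have key : C₂ ≤ (12 / ν) ^ j * (M * (2 ^ s * ν ^ s)) := by
      rw [hq, hdj, h2νr] at hreal
      have h6 : (12 / ν) ^ j * (M * (2 ^ s * (ν ^ s * r ^ s)))
          = ((12 / ν) ^ j * (M * (2 ^ s * ν ^ s))) * r ^ s := by ring
      rw [h6] at hreal
      exact le_of_mul_le_mul_right hreal hrs
    have hνsj : ν ^ (s - (j:ℝ)) = ν ^ s / ν ^ j := by
      rw [Real.rpow_sub hν, Real.rpow_natCast]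
    have h2s : (2:ℝ) ^ s ≤ 2 ^ m := by
      rw [← Real.rpow_natCast 2 m]
      exact Real.rpow_le_rpow_of_exponent_le one_le_two hsm
    have h12 : (12:ℝ) ^ j ≤ 12 ^ m := pow_le_pow_right₀ (by norm_num) hjm
    have hνs : (0:ℝ) ≤ ν ^ s := Real.rpow_nonneg hν.le s
    have hνj : (0:ℝ) < ν ^ j := pow_pos hν j
    calc C₂ ≤ (12 / ν) ^ j * (M * (2 ^ s * ν ^ s)) := key
      _ = (12 ^ j * 2 ^ s) * (M * (ν ^ s / ν ^ j)) := by
          rw [div_pow]; field_simp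
      _ ≤ (12 ^ m * 2 ^ m) * (M * (ν ^ s / ν ^ j)) := by
          apply mul_le_mul_of_nonneg_right
          · exact mul_le_mul h12 h2s (Real.rpow_nonneg (by norm_num) s) (by positivity)
          · exact mul_nonneg hM.le (div_nonneg hνs hνj.le)
      _ = 24 ^ m * M * ν ^ (s - (j:ℝ)) := by
          rw [hνsj, show (12:ℝ) ^ m * 2 ^ m = 24 ^ m by rw [← mul_pow]; norm_num]
          ring
  · -- case s > m : contradiction
    exfalso
    have h3m : (1:ℝ) ≤ 3 ^ m := one_le_pow₀ (by norm_num)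
    set q := C₂ / (2 * 3 ^ m * M) with hqdef
    have hq0 : 0 < q := div_pos hC₂ (by positivity)
    have hq1 : q < 1 := by
      rw [hqdef, div_lt_one (by positivity)]
      have h1 : M ≤ 3 ^ m * M := le_mul_of_one_le_left hM.le h3m
      have h2 : (0:ℝ) < 3 ^ m * M := mul_pos (by positivity) hM
      linarith
    have hsm' : (0:ℝ) < s - m := sub_pos.2 hsm
    set ε := r * q ^ ((1:ℝ) / (s - m)) with hεdef
    have hε0 : 0 < ε := mul_pos hr (Real.rpow_pos_of_pos hq0 _)
    have hεr : ε ≤ r := by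
      have h1 : q ^ ((1:ℝ) / (s - m)) ≤ 1 :=
        Real.rpow_le_one hq0.le hq1.le (one_div_nonneg.2 hsm'.le)
      calc ε = r * q ^ ((1:ℝ) / (s - m)) := hεdef
        _ ≤ r * 1 := mul_le_mul_of_nonneg_left h1 hr.le
        _ = r := mul_one r
    obtain ⟨T, hcard, hcov⟩ := euclidean_cover m hε0 hεr
    have hFcov : F ⊆ ⋃ t ∈ T, ball (x₀ + t) ε := by
      intro y hy
      have h1 : y - x₀ ∈ closedBall (0 : EuclideanSpace ℝ (Fin m)) r := by
        rw [mem_closedBall_zero_iff]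
        have h2 := mem_ball.1 (hFsub hy)
        rw [dist_eq_norm] at h2
        exact h2.le
      obtain ⟨t, htT, htd⟩ : ∃ t ∈ T, (y - x₀) ∈ ball t ε := by
        simpa [mem_iUnion] using hcov h1
      simp only [mem_iUnion, exists_prop]
      refine ⟨t, htT, ?_⟩
      rw [mem_ball, dist_eq_norm] at htd ⊢
      rw [sub_add_eq_sub_sub]
      exact htd
    have hmeas : ENNReal.ofReal (C₂ * r ^ s)
        ≤ ENNReal.ofReal ((3 * r / ε) ^ m * (M * ε ^ s)) := by
      refine hμF.trans ?_
      calc μ F ≤ μ (⋃ t ∈ T, ball (x₀ + t) ε) := measure_mono hFcov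
        _ ≤ ∑ t ∈ T, μ (ball (x₀ + t) ε) := measure_biUnion_finset_le T _
        _ ≤ ∑ _t ∈ T, ENNReal.ofReal (M * ε ^ s) :=
            Finset.sum_le_sum fun t _ => hgrowth _ _ hε0
        _ = (T.card : ℝ≥0∞) * ENNReal.ofReal (M * ε ^ s) := by
            rw [Finset.sum_const, nsmul_eq_mul]
        _ ≤ ENNReal.ofReal ((3 * r / ε) ^ m) * ENNReal.ofReal (M * ε ^ s) := by
            gcongr
            rw [← ENNReal.ofReal_natCast]
            exact ENNReal.ofReal_le_ofReal hcard
        _ = ENNReal.ofReal ((3 * r / ε) ^ m * (M * ε ^ s)) := by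
            rw [← ENNReal.ofReal_mul (pow_nonneg (div_nonneg (by positivity) hε0.le) m)]
    have hreal : C₂ * r ^ s ≤ (3 * r / ε) ^ m * (M * ε ^ s) := by
      rw [ENNReal.ofReal_le_ofReal_iff (mul_nonneg
        (pow_nonneg (div_nonneg (by positivity) hε0.le) m)
        (mul_nonneg hM.le (Real.rpow_nonneg hε0.le s)))] at hmeas
      exact hmeas
    have hεm : (3 * r / ε) ^ m * ε ^ (m:ℝ) = (3 * r) ^ m := by
      rw [Real.rpow_natCast, div_pow, div_mul_cancel₀ _ (pow_ne_zero _ hε0.ne')]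
    have hεs : ε ^ s = ε ^ (m:ℝ) * ε ^ (s - m) := by
      rw [← Real.rpow_add hε0]
      norm_num
    have hεsm : ε ^ (s - (m:ℝ)) = r ^ (s - (m:ℝ)) * q := by
      rw [hεdef, Real.mul_rpow hr.le (Real.rpow_nonneg hq0.le _),
        ← Real.rpow_mul hq0.le, one_div_mul_cancel hsm'.ne', Real.rpow_one]
    have hrm : r ^ (m:ℝ) * r ^ (s - (m:ℝ)) = r ^ s := by
      rw [← Real.rpow_add hr]
      norm_num
    have hcalc : (3 * r / ε) ^ m * (M * ε ^ s) = 3 ^ m * M * q * r ^ s := by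
      calc (3 * r / ε) ^ m * (M * ε ^ s)
          = ((3 * r / ε) ^ m * ε ^ (m:ℝ)) * (M * ε ^ (s - m)) := by rw [hεs]; ring
        _ = (3 * r) ^ m * (M * (r ^ (s - (m:ℝ)) * q)) := by rw [hεm, hεsm]
        _ = 3 ^ m * M * q * (r ^ m * r ^ (s - (m:ℝ))) := by rw [mul_pow]; ring
        _ = 3 ^ m * M * q * r ^ s := by rw [← Real.rpow_natCast r m, hrm]
    have hqval : 3 ^ m * M * q = C₂ / 2 := by
      rw [hqdef]
      field_simp
    rw [hcalc, hqval] at hreal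
    have hfin : C₂ ≤ C₂ / 2 := le_of_mul_le_mul_right (by linarith) hrs
    linarith
end

section
/- Let μ be a Borel measure on ℝ^m with μ(B(x,r)) ≤ M r^s for all x, r, where n < s ≤ n+1 ≤ m for an integer n. Suppose F ⊂ B(x₀,r) satisfies μ(F) ≥ C₂ r^s. Then there exist a constant C₃ > 0 depending only on m, n, s, C₂, M, and points y₀, …, y_{n+1} ∈ F such that for each j = 1, …, n+1, the distance from y_j to the affine span of y₀, …, y_{j−1} is at least C₃ r. -/
open MeasureTheory Metric Set Filter
open scoped ENNReal NNReal

theorem spread_net (k : ℕ) {ε : ℝ} (hε : 0 < ε) :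
    ∃ T : Finset (EuclideanSpace ℝ (Fin k)),
      (closedBall (0 : EuclideanSpace ℝ (Fin k)) 3 ⊆ ⋃ t ∈ T, ball t ε) ∧
      (T.card : ℝ) ≤ (6 / ε + 1) ^ k := by
  classical
  set Eu := EuclideanSpace ℝ (Fin k)
  have hv0 : volume (ball (0 : Eu) 1) ≠ 0 := (measure_ball_pos _ _ one_pos).ne'
  have hvt : volume (ball (0 : Eu) 1) ≠ ⊤ := measure_ball_lt_top.ne
  have hfr : Module.finrank ℝ Eu = k := finrank_euclideanSpace_fin
  -- cardinality bound for separated sets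
  have hbound : ∀ T : Finset Eu, (↑T : Set Eu) ⊆ closedBall 0 3 →
      ((T : Set Eu).Pairwise fun a b => ε ≤ dist a b) → (T.card : ℝ) ≤ (6 / ε + 1) ^ k := by
    intro T hTsub hTsep
    have hdisj : (↑T : Set Eu).PairwiseDisjoint fun t => ball t (ε / 2) := by
      intro a ha b hb hab
      refine Set.disjoint_left.2 fun x hxa hxb => ?_
      have : dist a b < ε := by
        calc dist a b ≤ dist a x + dist x b := dist_triangle a x b
        _ < ε / 2 + ε / 2 := by
            rw [mem_ball] at hxa hxb
            rw [dist_comm a x]; linarith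
        _ = ε := by ring
      exact absurd this (not_lt.2 (hTsep ha hb hab))
    have hsub : (⋃ t ∈ T, ball t (ε / 2)) ⊆ ball (0 : Eu) (3 + ε / 2) := by
      simp only [iUnion_subset_iff]
      intro t ht x hx
      rw [mem_ball] at hx ⊢
      have h3 : dist t 0 ≤ 3 := hTsub ht
      calc dist x 0 ≤ dist x t + dist t 0 := dist_triangle _ _ _
        _ < ε / 2 + 3 := by linarith
        _ = 3 + ε / 2 := by ring
    have hsum : volume (⋃ t ∈ T, ball t (ε / 2)) = ∑ t ∈ T, volume (ball t (ε / 2)) :=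
      measure_biUnion_finset hdisj fun t _ => measurableSet_ball
    have hball : ∀ t : Eu, volume (ball t (ε / 2)) =
        ENNReal.ofReal ((ε / 2) ^ k) * volume (ball (0 : Eu) 1) := by
      intro t
      rw [Measure.addHaar_ball_of_pos volume t (by linarith : (0:ℝ) < ε / 2), hfr]
    have hbig : volume (ball (0 : Eu) (3 + ε / 2)) =
        ENNReal.ofReal ((3 + ε / 2) ^ k) * volume (ball (0 : Eu) 1) := by
      rw [Measure.addHaar_ball_of_pos volume _ (by linarith : (0:ℝ) < 3 + ε / 2), hfr]
    have hle : (T.card : ℝ≥0∞) * (ENNReal.ofReal ((ε / 2) ^ k) * volume (ball (0 : Eu) 1)) ≤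
        ENNReal.ofReal ((3 + ε / 2) ^ k) * volume (ball (0 : Eu) 1) := by
      calc (T.card : ℝ≥0∞) * (ENNReal.ofReal ((ε / 2) ^ k) * volume (ball (0 : Eu) 1))
          = ∑ t ∈ T, volume (ball t (ε / 2)) := by
            rw [Finset.sum_congr rfl fun t _ => hball t, Finset.sum_const, nsmul_eq_mul]
        _ = volume (⋃ t ∈ T, ball t (ε / 2)) := hsum.symm
        _ ≤ volume (ball (0 : Eu) (3 + ε / 2)) := measure_mono hsub
        _ = _ := hbig
    rw [← mul_assoc, ENNReal.mul_le_mul_iff_left hv0 hvt] at hle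
    have hle' : (T.card : ℝ) * (ε / 2) ^ k ≤ (3 + ε / 2) ^ k := by
      have := hle
      rw [← ENNReal.ofReal_natCast T.card, ← ENNReal.ofReal_mul (by positivity)] at this
      exact (ENNReal.ofReal_le_ofReal_iff (by positivity)).1 this
    have hpow : ((3 + ε / 2) / (ε / 2)) ^ k = (6 / ε + 1) ^ k := by
      congr 1
      field_simp
      ring
    rw [← hpow, div_pow]
    rw [le_div_iff₀ (by positivity)]
    exact hle'
  -- maximal separated set
  set S : Set ℕ := {c | ∃ T : Finset Eu, (↑T : Set Eu) ⊆ closedBall 0 3 ∧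
    ((T : Set Eu).Pairwise fun a b => ε ≤ dist a b) ∧ T.card = c} with hS
  have hS0 : 0 ∈ S := ⟨∅, by simp, by simp, rfl⟩
  have hSbdd : BddAbove S := by
    refine ⟨Nat.floor ((6 / ε + 1) ^ k), fun c hc => ?_⟩
    obtain ⟨T, h1, h2, rfl⟩ := hc
    exact Nat.le_floor (hbound T h1 h2)
  obtain ⟨T, hT1, hT2, hTcard⟩ := Nat.sSup_mem ⟨0, hS0⟩ hSbdd
  refine ⟨T, ?_, hTcard ▸ hbound T hT1 hT2⟩
  intro x hx
  by_contra hxn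
  have hsep : ∀ t ∈ T, ε ≤ dist x t := by
    intro t ht
    by_contra h
    exact hxn (mem_iUnion₂.2 ⟨t, ht, by simpa [mem_ball] using not_le.1 h⟩)
  have hxT : x ∉ T := fun h => by
    have := hsep x h; simp at this; linarith
  have : T.card + 1 ∈ S := by
    refine ⟨insert x T, ?_, ?_, by rw [Finset.card_insert_of_notMem hxT]⟩
    · intro a ha
      rcases Finset.mem_insert.1 (by exact_mod_cast ha) with rfl | haT
      · exact hx
      · exact hT1 haT
    · rw [Finset.coe_insert]
      refine Set.pairwise_insert.2 ⟨hT2, fun b hb _ => ⟨hsep b hb, ?_⟩⟩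
      rw [dist_comm]; exact hsep _ hb
  have := le_csSup hSbdd this
  omega


theorem spread_slab {m n : ℕ} {s M ε r : ℝ} (hε : 0 < ε) (hε1 : ε ≤ 1) (hr : 0 < r)
    (hM : 0 ≤ M)
    (μ : Measure (EuclideanSpace ℝ (Fin m))) (x₀ : EuclideanSpace ℝ (Fin m))
    (hμ : ∀ (x : EuclideanSpace ℝ (Fin m)) (t : ℝ), 0 < t →
      μ (ball x t) ≤ ENNReal.ofReal (M * t ^ s))
    (V : AffineSubspace ℝ (EuclideanSpace ℝ (Fin m))) (c : EuclideanSpace ℝ (Fin m))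
    (hcV : c ∈ V) (hc : c ∈ ball x₀ r)
    (hdim : Module.finrank ℝ V.direction ≤ n)
    (hnet : ∃ T₀ : Finset (EuclideanSpace ℝ (Fin (Module.finrank ℝ V.direction))),
      (closedBall (0 : EuclideanSpace ℝ (Fin (Module.finrank ℝ V.direction))) 3
        ⊆ ⋃ t ∈ T₀, ball t ε) ∧
      (T₀.card : ℝ) ≤ (6 / ε + 1) ^ (Module.finrank ℝ V.direction)) :
    μ {x | x ∈ ball x₀ r ∧ infDist x (V : Set (EuclideanSpace ℝ (Fin m))) < ε * r} ≤
      ENNReal.ofReal ((6 / ε + 1) ^ n * (M * (2 * ε * r) ^ s)) := by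
  classical
  set W := V.direction
  set k := Module.finrank ℝ W with hk
  obtain ⟨T₀, hT₀cov, hT₀card⟩ := hnet
  set φ := (stdOrthonormalBasis ℝ W).repr with hφ
  set f : EuclideanSpace ℝ (Fin k) → EuclideanSpace ℝ (Fin m) := fun u => c + r • ((φ.symm u : W) : EuclideanSpace ℝ (Fin m)) with hf
  set T : Finset (EuclideanSpace ℝ (Fin m)) := T₀.image f with hT
  have hVne : (V : Set (EuclideanSpace ℝ (Fin m))).Nonempty := ⟨c, hcV⟩
  have hrne : r ≠ 0 := hr.ne'
  -- covering
  have hcov : {x | x ∈ ball x₀ r ∧ infDist x (V : Set (EuclideanSpace ℝ (Fin m))) < ε * r} ⊆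
      ⋃ t ∈ T, ball t (2 * ε * r) := by
    rintro x ⟨hx, hxd⟩
    obtain ⟨v, hvV, hvx⟩ := (infDist_lt_iff hVne).1 hxd
    have hvc : dist v c < 3 * r := by
      have h1 : dist x c ≤ dist x x₀ + dist x₀ c := dist_triangle _ _ _
      have h2 : dist x x₀ < r := mem_ball.1 hx
      have h3 : dist x₀ c < r := by rw [dist_comm]; exact mem_ball.1 hc
      have h4 : dist v c ≤ dist v x + dist x c := dist_triangle _ _ _
      have h5 : dist v x = dist x v := dist_comm _ _
      nlinarith
    have hwmem : v - c ∈ W := by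
      simpa using AffineSubspace.vsub_mem_direction hvV hcV
    set w : W := ⟨v - c, hwmem⟩ with hw
    have hwn : ‖w‖ < 3 * r := by
      rw [show ‖w‖ = ‖v - c‖ from rfl, ← dist_eq_norm]; exact hvc
    set u₀ : EuclideanSpace ℝ (Fin k) := φ (r⁻¹ • w) with hu₀
    have hu₀n : ‖u₀‖ ≤ 3 := by
      rw [hu₀, φ.norm_map, norm_smul, norm_inv, Real.norm_eq_abs, abs_of_pos hr]
      rw [inv_mul_le_iff₀ hr]
      linarith
    obtain ⟨t₀, ht₀T, ht₀⟩ := mem_iUnion₂.1 (hT₀cov (mem_closedBall_zero_iff.2 hu₀n))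
    refine mem_iUnion₂.2 ⟨f t₀, Finset.mem_image_of_mem f ht₀T, ?_⟩
    have hdvf : dist v (f t₀) < ε * r := by
      have hsymm : φ.symm u₀ = r⁻¹ • w := by rw [hu₀, φ.symm_apply_apply]
      have : v - f t₀ = ((r • (φ.symm u₀ - φ.symm t₀) : W) : EuclideanSpace ℝ (Fin m)) := by
        push_cast [hsymm, smul_sub, smul_smul, mul_inv_cancel₀ hrne, one_smul]
        rw [hf]
        simp only [hw]
        abel
      rw [dist_eq_norm, this]
      have : ‖((r • (φ.symm u₀ - φ.symm t₀) : W) : EuclideanSpace ℝ (Fin m))‖ = r * ‖φ.symm u₀ - φ.symm t₀‖ := by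
        rw [Submodule.norm_coe, norm_smul, Real.norm_eq_abs, abs_of_pos hr]
      rw [this]
      have : ‖φ.symm u₀ - φ.symm t₀‖ = dist u₀ t₀ := by
        rw [← map_sub, φ.symm.norm_map, ← dist_eq_norm]
      rw [this, mul_comm]
      exact mul_lt_mul_of_pos_right (mem_ball.1 ht₀) hr
    rw [mem_ball]
    calc dist x (f t₀) ≤ dist x v + dist v (f t₀) := dist_triangle _ _ _
      _ < ε * r + ε * r := add_lt_add hvx hdvf
      _ = 2 * ε * r := by ring
  -- measure bound
  have h2εr : (0:ℝ) < 2 * ε * r := by positivity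
  calc μ {x | x ∈ ball x₀ r ∧ infDist x (V : Set (EuclideanSpace ℝ (Fin m))) < ε * r}
      ≤ μ (⋃ t ∈ T, ball t (2 * ε * r)) := measure_mono hcov
    _ ≤ ∑ t ∈ T, μ (ball t (2 * ε * r)) := measure_biUnion_finset_le T _
    _ ≤ ∑ _t ∈ T, ENNReal.ofReal (M * (2 * ε * r) ^ s) :=
        Finset.sum_le_sum fun t _ => hμ t _ h2εr
    _ = (T.card : ℝ≥0∞) * ENNReal.ofReal (M * (2 * ε * r) ^ s) := by
        rw [Finset.sum_const, nsmul_eq_mul]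
    _ ≤ ENNReal.ofReal ((6 / ε + 1) ^ n) * ENNReal.ofReal (M * (2 * ε * r) ^ s) := by
        refine mul_le_mul_left ?_ _
        rw [← ENNReal.ofReal_natCast T.card]
        refine ENNReal.ofReal_le_ofReal ?_
        refine le_trans (le_trans (Nat.cast_le.2 (Finset.card_image_le)) hT₀card) ?_
        have h1 : (1:ℝ) ≤ 6 / ε + 1 := by
          have : (0:ℝ) < 6 / ε := by positivity
          linarith
        exact pow_le_pow_right₀ h1 hdim
    _ = ENNReal.ofReal ((6 / ε + 1) ^ n * (M * (2 * ε * r) ^ s)) := by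
        rw [← ENNReal.ofReal_mul (by positivity)]


theorem spread_image_snoc {α : Type*} {l : ℕ} (y : Fin (l + 1) → α) (z : α) {jv : ℕ}
    (h : jv ≤ l + 1) :
    (Fin.snoc y z : Fin (l + 2) → α) '' {i | (i : ℕ) < jv} =
      y '' {i : Fin (l + 1) | (i : ℕ) < jv} := by
  ext a
  constructor
  · rintro ⟨i, hi, rfl⟩
    have hi' : (i : ℕ) < jv := hi
    have hil : (i : ℕ) < l + 1 := lt_of_lt_of_le hi' h
    refine ⟨⟨i, hil⟩, hi', ?_⟩
    have he : i = Fin.castSucc ⟨(i : ℕ), hil⟩ := by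
      apply Fin.ext; simp
    conv_rhs => rw [he, Fin.snoc_castSucc]
  · rintro ⟨i, hi, rfl⟩
    have hi' : (i : ℕ) < jv := hi
    exact ⟨Fin.castSucc i, by simpa using hi', Fin.snoc_castSucc _ _ _⟩

/-- Existence of `n+2` well-spread points in a set of large measure inside a ball. -/
theorem exists_spread_points (m n : ℕ) (s C₂ M : ℝ)
    (hn : (n : ℝ) < s) (hs : s ≤ n + 1) (hnm : n + 1 ≤ m)
    (hC₂ : 0 < C₂) (hM : 0 < M) :
    ∃ C₃ : ℝ, 0 < C₃ ∧
      ∀ (μ : Measure (EuclideanSpace ℝ (Fin m))) (x₀ : EuclideanSpace ℝ (Fin m))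
        (r : ℝ) (F : Set (EuclideanSpace ℝ (Fin m))),
        0 < r →
        (∀ (x : EuclideanSpace ℝ (Fin m)) (t : ℝ), 0 < t →
          μ (ball x t) ≤ ENNReal.ofReal (M * t ^ s)) →
        F ⊆ ball x₀ r →
        ENNReal.ofReal (C₂ * r ^ s) ≤ μ F →
        ∃ y : Fin (n + 2) → EuclideanSpace ℝ (Fin m),
          (∀ i, y i ∈ F) ∧
          ∀ j : Fin (n + 2), 1 ≤ (j : ℕ) →
            C₃ * r ≤ Metric.infDist (y j)
              ((affineSpan ℝ (y '' {i | (i : ℕ) < (j : ℕ)}) :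
                AffineSubspace ℝ (EuclideanSpace ℝ (Fin m))) :
                Set (EuclideanSpace ℝ (Fin m))) := by
  have hδ : (0:ℝ) < s - (n:ℝ) := by linarith
  set A : ℝ := 7 ^ n * (2:ℝ) ^ s * M with hA
  have hApos : 0 < A := by positivity
  set ε : ℝ := min 1 ((C₂ / (2 * A)) ^ (s - (n:ℝ))⁻¹) with hεdef
  have hε0 : 0 < ε := lt_min one_pos (Real.rpow_pos_of_pos (by positivity) _)
  have hε1 : ε ≤ 1 := min_le_left _ _
  have hcore : ((6 / ε + 1) ^ n) * (M * (2 * ε) ^ s) < C₂ := by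
    have h1ε : (1:ℝ) ≤ 1 / ε := one_le_one_div hε0 hε1
    have h7 : (6 / ε + 1 : ℝ) ≤ 7 / ε := by
      have : (7:ℝ) / ε = 6 / ε + 1 / ε := by ring
      linarith
    have hpow : ((6 / ε + 1 : ℝ)) ^ n ≤ (7 / ε) ^ n :=
      pow_le_pow_left₀ (by positivity) h7 n
    have step1 : ((6 / ε + 1) ^ n) * (M * (2 * ε) ^ s) ≤ ((7 / ε) ^ n) * (M * (2 * ε) ^ s) :=
      mul_le_mul_of_nonneg_right hpow (by positivity)
    have heq : ((7 / ε) ^ n) * (M * (2 * ε) ^ s) = A * ε ^ (s - (n:ℝ)) := by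
      rw [Real.mul_rpow (by norm_num) hε0.le, Real.rpow_sub hε0, Real.rpow_natCast, div_pow, hA]
      have hεn : (0:ℝ) < ε ^ n := by positivity
      field_simp
    have step2 : A * ε ^ (s - (n:ℝ)) ≤ A * (C₂ / (2 * A)) := by
      refine mul_le_mul_of_nonneg_left ?_ hApos.le
      have hεle : ε ≤ (C₂ / (2 * A)) ^ (s - (n:ℝ))⁻¹ := min_le_right _ _
      calc ε ^ (s - (n:ℝ)) ≤ ((C₂ / (2 * A)) ^ (s - (n:ℝ))⁻¹) ^ (s - (n:ℝ)) :=
            Real.rpow_le_rpow hε0.le hεle hδ.le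
        _ = C₂ / (2 * A) := by
            rw [← Real.rpow_mul (by positivity), inv_mul_cancel₀ hδ.ne', Real.rpow_one]
    have step3 : A * (C₂ / (2 * A)) = C₂ / 2 := by
      field_simp
    calc ((6 / ε + 1) ^ n) * (M * (2 * ε) ^ s) ≤ A * ε ^ (s - (n:ℝ)) := heq ▸ step1
      _ ≤ C₂ / 2 := step3 ▸ step2
      _ < C₂ := by linarith
  refine ⟨ε, hε0, ?_⟩
  intro μ x₀ r F hr hμ hF hμF
  have hrs : (0:ℝ) < r ^ s := Real.rpow_pos_of_pos hr s
  have hFne : F.Nonempty := by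
    rcases Set.eq_empty_or_nonempty F with rfl | h
    · exfalso
      rw [measure_empty] at hμF
      have : ENNReal.ofReal (C₂ * r ^ s) = 0 := le_antisymm hμF zero_le
      rw [ENNReal.ofReal_eq_zero] at this
      nlinarith
    · exact h
  have key : ∀ V : AffineSubspace ℝ (EuclideanSpace ℝ (Fin m)),
      Module.finrank ℝ V.direction ≤ n → (∃ c, c ∈ V ∧ c ∈ F) →
      ∃ z ∈ F, ε * r ≤ infDist z (V : Set (EuclideanSpace ℝ (Fin m))) := by
    rintro V hdim ⟨c, hcV, hcF⟩
    by_contra hcon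
    push_neg at hcon
    have hsub : F ⊆ {x | x ∈ ball x₀ r ∧
        infDist x (V : Set (EuclideanSpace ℝ (Fin m))) < ε * r} :=
      fun z hz => ⟨hF hz, hcon z hz⟩
    have hslab := spread_slab hε0 hε1 hr hM.le μ x₀ hμ V c hcV (hF hcF) hdim
      (spread_net _ hε0)
    have hlt : ((6 / ε + 1) ^ n) * (M * (2 * ε * r) ^ s) < C₂ * r ^ s := by
      have h2 : (2 * ε * r) ^ s = (2 * ε) ^ s * r ^ s := Real.mul_rpow (by positivity) hr.le
      calc ((6 / ε + 1) ^ n) * (M * (2 * ε * r) ^ s)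
          = (((6 / ε + 1) ^ n) * (M * (2 * ε) ^ s)) * r ^ s := by rw [h2]; ring
        _ < C₂ * r ^ s := mul_lt_mul_of_pos_right hcore hrs
    have : μ F < μ F :=
      lt_of_le_of_lt (le_trans (measure_mono hsub) hslab)
        (lt_of_lt_of_le ((ENNReal.ofReal_lt_ofReal_iff (mul_pos hC₂ hrs)).2 hlt) hμF)
    exact lt_irrefl _ this
  obtain ⟨p₀, hp₀⟩ := hFne
  have main : ∀ l : ℕ, l ≤ n + 1 → ∃ y : Fin (l + 1) → EuclideanSpace ℝ (Fin m),
      (∀ i, y i ∈ F) ∧ ∀ j : Fin (l + 1), 1 ≤ (j : ℕ) →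
        ε * r ≤ infDist (y j)
          ((affineSpan ℝ (y '' {i | (i : ℕ) < (j : ℕ)}) :
            AffineSubspace ℝ (EuclideanSpace ℝ (Fin m))) :
            Set (EuclideanSpace ℝ (Fin m))) := by
    intro l
    induction l with
    | zero =>
      intro _
      exact ⟨fun _ => p₀, fun _ => hp₀, fun j hj => absurd hj (by have := j.isLt; omega)⟩
    | succ l ih =>
      intro hl
      obtain ⟨y, hyF, hy⟩ := ih (by omega)
      have hrange : y '' {i : Fin (l + 1) | (i : ℕ) < l + 1} = Set.range y := by
        rw [show {i : Fin (l + 1) | (i : ℕ) < l + 1} = Set.univ from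
          Set.eq_univ_of_forall fun i => i.isLt, Set.image_univ]
      set V := affineSpan ℝ (Set.range y) with hV
      have hdim : Module.finrank ℝ V.direction ≤ n := by
        rw [hV, direction_affineSpan]
        exact le_trans (finrank_vectorSpan_range_le ℝ y (n := l) (by simp)) (by omega)
      obtain ⟨z, hzF, hz⟩ := key V hdim
        ⟨y 0, subset_affineSpan ℝ _ (Set.mem_range_self 0), hyF 0⟩
      refine ⟨Fin.snoc y z, ?_, ?_⟩
      · intro i
        refine Fin.lastCases ?_ ?_ i
        · rw [Fin.snoc_last]; exact hzF
        · intro i₀; rw [Fin.snoc_castSucc]; exact hyF i₀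
      · intro j hj
        rcases lt_or_ge (j : ℕ) (l + 1) with hjl | hjl
        · have him := spread_image_snoc y z (le_of_lt hjl)
          have hyj : (Fin.snoc y z : Fin (l + 2) → EuclideanSpace ℝ (Fin m)) j
              = y ⟨(j : ℕ), hjl⟩ := by
            have hje : j = Fin.castSucc ⟨(j : ℕ), hjl⟩ := Fin.ext (by simp)
            conv_lhs => rw [hje, Fin.snoc_castSucc]
          rw [him, hyj]
          exact hy ⟨(j : ℕ), hjl⟩ hj
        · have hjv : (j : ℕ) = l + 1 := by have := j.isLt; omega
          have him : (Fin.snoc y z : Fin (l + 2) → EuclideanSpace ℝ (Fin m)) ''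
              {i | (i : ℕ) < (j : ℕ)} = Set.range y := by
            rw [hjv, spread_image_snoc y z (le_refl (l + 1)), hrange]
          have hyj : (Fin.snoc y z : Fin (l + 2) → EuclideanSpace ℝ (Fin m)) j = z := by
            have hje : j = Fin.last (l + 1) := Fin.ext (by simp [hjv])
            rw [hje, Fin.snoc_last]
          rw [him, hyj]
          exact hz
  obtain ⟨y, h1, h2⟩ := main (n + 1) le_rfl
  exact ⟨y, h1, h2⟩
end

section
/- Let r > 0, let y₀ = 0, y₁, …, y_k ∈ B(0,r) ⊂ ℝ^m be points such that d(y_j, span{y₀,…,y_{j−1}}) ≥ cr for all j = 1,…,k (with span meaning affine span, and d(y₁, {0}) = |y₁| ≥ cr), and let e₁, …, e_k be an orthonormal basis of span{y₁,…,y_k} obtained by Gram–Schmidt (so span{e₁,…,e_j} = span{y₁,…,y_j}). Then for any vector-valued linear map T: ℝ^m → ℝ^m and any 1 ≤ k' ≤ k, |T(e_{k'})| ≤ C(c,k) r^{−1} Σ_{j=1}^{k'} |T(y_j)|, where C(c,k) depends only on c and k. -/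
open MeasureTheory Metric Set Filter
open scoped RealInnerProductSpace

private lemma geom_aux {c : ℝ} (hc : 0 < c) : ∀ n : ℕ,
    1 + (1/c) * ∑ i ∈ Finset.range n, (1 + 1/c)^i ≤ (1 + 1/c)^n := by
  intro n
  induction n with
  | zero => simp
  | succ n ih =>
    rw [Finset.sum_range_succ, mul_add, ← add_assoc, pow_succ]
    have h1 : (0:ℝ) < 1/c := by positivity
    nlinarith [pow_pos (by linarith : (0:ℝ) < 1 + 1/c) n]

private lemma fin_sum_Iio {k : ℕ} (j : Fin k) (f : ℕ → ℝ) :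
    ∑ i ∈ Finset.Iio j, f (i : ℕ) = ∑ t ∈ Finset.range (j : ℕ), f t := by
  refine Finset.sum_bij (fun i _ => (i : ℕ)) ?_ ?_ ?_ ?_
  · intro a ha; simpa [Finset.mem_range] using Finset.mem_Iio.mp ha
  · intro a _ b _ h; exact Fin.ext h
  · intro b hb
    have hb' := Finset.mem_range.mp hb
    exact ⟨⟨b, hb'.trans j.isLt⟩, Finset.mem_Iio.mpr (by simpa [Fin.lt_def] using hb'), rfl⟩
  · intro a _; rfl

/-- Control of a linear map on Gram–Schmidt orthonormal vectors by its values on the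
original well-spread points. -/
theorem linear_map_gram_schmidt_bound (k : ℕ) (c : ℝ) (hc : 0 < c) :
    ∃ C : ℝ, 0 < C ∧
      ∀ (m : ℕ) (r : ℝ) (y e : Fin k → EuclideanSpace ℝ (Fin m))
        (T : EuclideanSpace ℝ (Fin m) →ₗ[ℝ] EuclideanSpace ℝ (Fin m)),
        0 < r →
        (∀ j, y j ∈ ball (0 : EuclideanSpace ℝ (Fin m)) r) →
        (∀ j : Fin k, c * r ≤ Metric.infDist (y j)
            ((Submodule.span ℝ (y '' {i | (i : ℕ) < (j : ℕ)}) :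
              Submodule ℝ (EuclideanSpace ℝ (Fin m))) : Set (EuclideanSpace ℝ (Fin m)))) →
        Orthonormal ℝ e →
        (∀ j : Fin k, Submodule.span ℝ (e '' {i | (i : ℕ) ≤ (j : ℕ)})
            = Submodule.span ℝ (y '' {i | (i : ℕ) ≤ (j : ℕ)})) →
        ∀ k' : Fin k, ‖T (e k')‖ ≤ C / r * ∑ j ∈ Finset.Iic k', ‖T (y j)‖ := by
  refine ⟨(1/c) * (1 + 1/c)^k, by positivity, ?_⟩
  intro m r y e T hr hball hdist he hspan
  have hc' : (0:ℝ) < 1/c := by positivity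
  have ha0 : (0:ℝ) < 1 + 1/c := by linarith
  have key : ∀ N : ℕ, ∀ j : Fin k, (j : ℕ) < N →
      ‖T (e j)‖ ≤ ((1/c) * (1 + 1/c)^(j:ℕ)) / r * ∑ t ∈ Finset.Iic j, ‖T (y t)‖ := by
    intro N
    induction N with
    | zero => exact fun j hj => absurd hj (Nat.not_lt_zero _)
    | succ N IH =>
      intro j hj
      set S : ℝ := ∑ t ∈ Finset.Iic j, ‖T (y t)‖ with hS
      have hS0 : 0 ≤ S := Finset.sum_nonneg fun _ _ => norm_nonneg _
      -- decompose y j in terms of e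
      have hyj : y j ∈ Submodule.span ℝ (e '' {i : Fin k | (i:ℕ) ≤ (j:ℕ)}) := by
        rw [hspan j]
        exact Submodule.subset_span ⟨j, by simp, rfl⟩
      rw [Finsupp.mem_span_image_iff_linearCombination] at hyj
      obtain ⟨l, hl, hly⟩ := hyj
      rw [Finsupp.mem_supported] at hl
      have hcoef : ∀ i, l i = ⟪e i, y j⟫ := fun i => by
        rw [← hly, he.inner_right_finsupp]
      set g := l.erase j with hg
      set v := Finsupp.linearCombination ℝ e g with hv
      have hdecomp : y j = v + l j • e j := by
        conv_lhs => rw [← hly, ← Finsupp.erase_add_single j l]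
        rw [map_add, Finsupp.linearCombination_single]
      have hgsupp : ↑g.support ⊆ {i : Fin k | (i:ℕ) < (j:ℕ)} := by
        intro i hi
        rw [hg, Finsupp.support_erase, Finset.coe_erase] at hi
        have h1 : (i:ℕ) ≤ (j:ℕ) := hl hi.1
        have h2 : (i:ℕ) ≠ (j:ℕ) := fun h => hi.2 (Fin.ext h)
        exact lt_of_le_of_ne h1 h2
      have hspan' : Submodule.span ℝ (e '' {i : Fin k | (i:ℕ) < (j:ℕ)})
          = Submodule.span ℝ (y '' {i : Fin k | (i:ℕ) < (j:ℕ)}) := by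
        rcases Nat.eq_zero_or_pos (j:ℕ) with h0 | hpos
        · have hempty : {i : Fin k | (i:ℕ) < (j:ℕ)} = ∅ := by
            ext i; simp [h0]
          rw [hempty]; simp
        · obtain ⟨n', hn'⟩ := Nat.exists_eq_succ_of_ne_zero hpos.ne'
          have hset : {i : Fin k | (i:ℕ) < (j:ℕ)} = {i : Fin k | (i:ℕ) ≤ n'} := by
            ext i; simp [hn', Nat.lt_succ_iff]
          have hn'k : n' < k := by have := j.isLt; omega
          rw [hset]
          exact hspan ⟨n', hn'k⟩
      have hvmem : v ∈ Submodule.span ℝ (y '' {i : Fin k | (i:ℕ) < (j:ℕ)}) := by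
        rw [← hspan']
        exact (Finsupp.mem_span_image_iff_linearCombination ℝ).mpr
          ⟨g, (Finsupp.mem_supported ℝ g).mpr hgsupp, rfl⟩
      have hej : ‖e j‖ = 1 := he.1 j
      have hlj : c * r ≤ |l j| := by
        have h1 := hdist j
        have h2 : Metric.infDist (y j)
            ((Submodule.span ℝ (y '' {i : Fin k | (i:ℕ) < (j:ℕ)}) :
              Submodule ℝ (EuclideanSpace ℝ (Fin m))) :
              Set (EuclideanSpace ℝ (Fin m))) ≤ dist (y j) v :=
          Metric.infDist_le_dist_of_mem hvmem
        have h3 : dist (y j) v = |l j| := by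
          rw [dist_eq_norm]
          have h4 : y j - v = l j • e j := by rw [hdecomp]; abel
          rw [h4, norm_smul, hej, Real.norm_eq_abs, mul_one]
        exact h1.trans (h2.trans_eq h3)
      have hyr : ‖y j‖ ≤ r := le_of_lt (mem_ball_zero_iff.mp (hball j))
      have hgi : ∀ i, |g i| ≤ r := by
        intro i
        rcases eq_or_ne i j with rfl | hij
        · rw [hg, Finsupp.erase_same]; simpa using le_of_lt hr
        · rw [hg, Finsupp.erase_ne hij, hcoef i]
          calc |⟪e i, y j⟫| ≤ ‖e i‖ * ‖y j‖ := abs_real_inner_le_norm _ _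
            _ ≤ r := by rw [he.1 i, one_mul]; exact hyr
      have hTv : ‖T v‖ ≤ ∑ i ∈ Finset.Iio j, |g i| * ‖T (e i)‖ := by
        have hexp : T v = ∑ i ∈ Finset.Iio j, g i • T (e i) := by
          rw [hv, Finsupp.apply_linearCombination,
            Finsupp.linearCombination_apply_of_mem_supported (R := ℝ)
              ((Finsupp.mem_supported ℝ g).mpr (by
                rw [Finset.coe_Iio]
                intro i hi
                exact Fin.lt_def.mpr (hgsupp hi)))]
          rfl
        rw [hexp]
        refine (norm_sum_le _ _).trans ?_
        refine Finset.sum_le_sum fun i _ => ?_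
        exact le_of_eq (by rw [norm_smul, Real.norm_eq_abs])
      have hIH : ∀ i ∈ Finset.Iio j, ‖T (e i)‖ ≤ ((1/c) * (1+1/c)^(i:ℕ)) / r * S := by
        intro i hi
        have hij : i < j := Finset.mem_Iio.mp hi
        have h1 := IH i (lt_of_lt_of_le (Fin.lt_def.mp hij) (Nat.lt_succ_iff.mp hj))
        refine h1.trans ?_
        have h2 : ∑ t ∈ Finset.Iic i, ‖T (y t)‖ ≤ S :=
          Finset.sum_le_sum_of_subset_of_nonneg (Finset.Iic_subset_Iic.mpr hij.le)
            (fun _ _ _ => norm_nonneg _)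
        have hpos : (0:ℝ) ≤ ((1/c) * (1+1/c)^(i:ℕ)) / r := by positivity
        exact mul_le_mul_of_nonneg_left h2 hpos
      have hTv2 : ‖T v‖ ≤ (∑ t ∈ Finset.range (j:ℕ), (1/c)*(1+1/c)^t) * S := by
        refine hTv.trans ?_
        calc ∑ i ∈ Finset.Iio j, |g i| * ‖T (e i)‖
            ≤ ∑ i ∈ Finset.Iio j, r * (((1/c) * (1+1/c)^(i:ℕ)) / r * S) := by
              refine Finset.sum_le_sum fun i hi => ?_
              exact mul_le_mul (hgi i) (hIH i hi) (norm_nonneg _) (le_of_lt hr)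
          _ = ∑ i ∈ Finset.Iio j, (1/c) * (1+1/c)^(i:ℕ) * S := by
              refine Finset.sum_congr rfl fun i _ => ?_
              field_simp
          _ = (∑ t ∈ Finset.range (j:ℕ), (1/c)*(1+1/c)^t) * S := by
              rw [← Finset.sum_mul, fin_sum_Iio j (fun t => (1/c)*(1+1/c)^t)]
      have hTy : T (y j) = T v + l j • T (e j) := by
        rw [hdecomp, map_add, T.map_smul]
      have hmain : |l j| * ‖T (e j)‖ ≤ ‖T (y j)‖ + ‖T v‖ := by
        have h5 : l j • T (e j) = T (y j) - T v := by rw [hTy]; abel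
        calc |l j| * ‖T (e j)‖ = ‖l j • T (e j)‖ := by rw [norm_smul, Real.norm_eq_abs]
          _ = ‖T (y j) - T v‖ := by rw [h5]
          _ ≤ ‖T (y j)‖ + ‖T v‖ := norm_sub_le _ _
      have hTyS : ‖T (y j)‖ ≤ S := by
        refine Finset.single_le_sum (f := fun t => ‖T (y t)‖) (fun _ _ => norm_nonneg _) ?_
        exact Finset.mem_Iic.mpr le_rfl
      have hgeom := geom_aux hc (j:ℕ)
      have hA' : (∑ t ∈ Finset.range (j:ℕ), (1/c)*(1+1/c)^t)
          = (1/c) * ∑ t ∈ Finset.range (j:ℕ), (1+1/c)^t := by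
        rw [Finset.mul_sum]
      rw [div_mul_eq_mul_div, le_div_iff₀ hr]
      have hfinal : ‖T (e j)‖ * r ≤ ((1+1/c)^(j:ℕ) * S) / c := by
        rw [le_div_iff₀ hc]
        have hcrX : c * r * ‖T (e j)‖ ≤ |l j| * ‖T (e j)‖ :=
          mul_le_mul_of_nonneg_right hlj (norm_nonneg _)
        have hgeomS : (1 + (1/c) * ∑ t ∈ Finset.range (j:ℕ), (1+1/c)^t) * S
            ≤ (1+1/c)^(j:ℕ) * S := mul_le_mul_of_nonneg_right hgeom hS0
        rw [hA'] at hTv2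
        nlinarith [hcrX, hmain, hTv2, hTyS, hgeomS]
      refine hfinal.trans (le_of_eq ?_)
      ring
  intro k'
  refine (key k k' k'.isLt).trans ?_
  have h1 : ((1/c) * (1+1/c)^(k':ℕ)) / r ≤ ((1/c)*(1+1/c)^k)/r := by
    have : (1+1/c)^(k':ℕ) ≤ (1+1/c)^k :=
      pow_le_pow_right₀ (by linarith) k'.isLt.le
    gcongr
  exact mul_le_mul_of_nonneg_right h1 (Finset.sum_nonneg fun _ _ => norm_nonneg _)
end

section
/- Let μ be a finite Borel measure on ℝ^m, s > 0, x ∈ ℝ^m with μ({x}) = 0, and suppose sup_{ε>0} |R^s_ε μ(x)| < ∞ and lim_{ε→0} R^s_ε μ(x) exists. Let φ be as above (C², φ(t) = t^{(s+1)/2} on [0,1], compactly supported, with ∫|φ'| < ∞ and ∫_0^∞ φ'(t) dt finite). Then lim_{ε→0} R^s_{φ,ε} μ(x) also exists, where R^s_{φ,ε}μ(x) = ∫ φ(|x−y|²/ε²)(x−y)/|x−y|^{s+1} dμ(y). -/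
open MeasureTheory Metric Set Filter

private lemma phi_cont_Icc {s : ℝ} (hs : 0 < s) {φ : ℝ → ℝ}
    (hφdiff : ContDiffOn ℝ 2 φ (Ioi 0))
    (hφeq : ∀ t ∈ Icc (0 : ℝ) 1, φ t = t ^ ((s + 1) / 2))
    {u : ℝ} (hu : 0 < u) : ContinuousOn φ (Icc 0 u) := by
  intro t ht
  rcases eq_or_lt_of_le ht.1 with h0 | h0
  · have hψ : ContinuousAt (fun r : ℝ => r ^ ((s + 1) / 2)) 0 :=
      Real.continuousAt_rpow_const 0 _ (Or.inr (by positivity))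
    have h1 : ∀ᶠ r in nhdsWithin (0 : ℝ) (Icc 0 u), r < 1 :=
      ((isOpen_Iio.eventually_mem (show (0:ℝ) ∈ Iio 1 by norm_num)).filter_mono
        nhdsWithin_le_nhds)
    rw [← h0]
    apply hψ.continuousWithinAt.congr_of_eventuallyEq
    · filter_upwards [eventually_mem_nhdsWithin, h1] with r hr hr1
      exact hφeq r ⟨hr.1, hr1.le⟩
    · exact hφeq 0 ⟨le_rfl, zero_le_one⟩
  · exact (hφdiff.continuousOn.continuousAt (isOpen_Ioi.mem_nhds h0)).continuousWithinAt

private lemma deriv_int {φ : ℝ → ℝ}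
    (hφ'int : IntegrableOn (fun t => |deriv φ t|) (Ioi (0 : ℝ))) :
    IntegrableOn (deriv φ) (Ioi (0 : ℝ)) :=
  Integrable.mono' hφ'int (measurable_deriv φ).aestronglyMeasurable
    (Eventually.of_forall fun t => le_of_eq (Real.norm_eq_abs _))

private lemma ftc_phi {s : ℝ} (hs : 0 < s) {φ : ℝ → ℝ}
    (hφdiff : ContDiffOn ℝ 2 φ (Ioi 0))
    (hφeq : ∀ t ∈ Icc (0 : ℝ) 1, φ t = t ^ ((s + 1) / 2))
    (hφ'int : IntegrableOn (fun t => |deriv φ t|) (Ioi (0 : ℝ)))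
    {u : ℝ} (hu : 0 < u) :
    ∫ t in Ioc 0 u, deriv φ t = φ u := by
  have hii : IntervalIntegrable (deriv φ) volume 0 u :=
    (intervalIntegrable_iff_integrableOn_Ioc_of_le hu.le).mpr
      ((deriv_int hφ'int).mono_set Ioc_subset_Ioi_self)
  have hd : ∀ t ∈ Ioo (0:ℝ) u, HasDerivWithinAt φ (deriv φ t) (Ioi t) t := by
    intro t ht
    exact (((hφdiff.differentiableOn (by norm_num)).differentiableAt
      (isOpen_Ioi.mem_nhds ht.1)).hasDerivAt).hasDerivWithinAt
  have h := intervalIntegral.integral_eq_sub_of_hasDeriv_right_of_le hu.le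
    (phi_cont_Icc hs hφdiff hφeq hu) hd hii
  rw [intervalIntegral.integral_of_le hu.le] at h
  rw [h, hφeq 0 ⟨le_rfl, zero_le_one⟩, Real.zero_rpow (by positivity), sub_zero]

private lemma deriv_phi {s : ℝ} {φ : ℝ → ℝ}
    (hφeq : ∀ t ∈ Icc (0 : ℝ) 1, φ t = t ^ ((s + 1) / 2))
    {t : ℝ} (ht : t ∈ Ioo (0:ℝ) 1) :
    deriv φ t = ((s + 1) / 2) * t ^ ((s + 1) / 2 - 1) := by
  have hev : φ =ᶠ[nhds t] fun r => r ^ ((s + 1) / 2) := by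
    filter_upwards [isOpen_Ioo.eventually_mem ht] with r hr
    exact hφeq r ⟨hr.1.le, hr.2.le⟩
  rw [hev.deriv_eq]
  exact (Real.hasDerivAt_rpow_const (Or.inl (ne_of_gt ht.1))).deriv

private lemma g_int {s : ℝ} (hs : 0 < s) {φ : ℝ → ℝ}
    (hφeq : ∀ t ∈ Icc (0 : ℝ) 1, φ t = t ^ ((s + 1) / 2))
    (hφ'int : IntegrableOn (fun t => |deriv φ t|) (Ioi (0 : ℝ))) :
    IntegrableOn (fun t => |deriv φ t| * t ^ (-s / 2)) (Ioi (0:ℝ)) := by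
  have hmeas : Measurable (fun t : ℝ => |deriv φ t| * t ^ (-s / 2)) := by
    exact ((measurable_deriv φ).abs).mul (by fun_prop)
  rw [← Ioc_union_Ioi_eq_Ioi (zero_le_one (α := ℝ))]
  apply IntegrableOn.union
  · -- on Ioc 0 1
    have h1 : IntegrableOn (fun t : ℝ => ((s+1)/2) * t ^ (-2⁻¹ : ℝ)) (Ioc (0:ℝ) 1) := by
      have := intervalIntegral.intervalIntegrable_rpow' (a := 0) (b := 1)
        (r := (-2⁻¹ : ℝ)) (by norm_num)
      exact ((intervalIntegrable_iff_integrableOn_Ioc_of_le zero_le_one).mp this).const_mul _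
    have h2 : IntegrableOn (fun t : ℝ => |deriv φ t| * t ^ (-s / 2)) (Ioo (0:ℝ) 1) := by
      apply (h1.mono_set Ioo_subset_Ioc_self).congr_fun ?_ measurableSet_Ioo
      intro t ht
      have ht0 : (0:ℝ) < t := ht.1
      show (s + 1) / 2 * t ^ (-2⁻¹ : ℝ) = |deriv φ t| * t ^ (-s / 2)
      symm
      rw [deriv_phi hφeq ht,
        abs_of_nonneg (mul_nonneg (by linarith) (Real.rpow_nonneg ht0.le _)),
        mul_assoc, ← Real.rpow_add ht0,
        show ((s + 1) / 2 - 1 + -s / 2 : ℝ) = -2⁻¹ from by ring]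
    exact h2.congr_set_ae Ioo_ae_eq_Ioc.symm
  · -- on Ioi 1
    apply Integrable.mono' (hφ'int.mono_set (Ioi_subset_Ioi zero_le_one))
      hmeas.aestronglyMeasurable
    filter_upwards [ae_restrict_mem measurableSet_Ioi] with t ht
    have ht0 : (0:ℝ) ≤ t := by linarith [mem_Ioi.mp ht]
    rw [Real.norm_eq_abs, abs_mul, abs_of_nonneg (Real.rpow_nonneg ht0 _), abs_abs]
    calc |deriv φ t| * t ^ (-s / 2) ≤ |deriv φ t| * 1 := by
          apply mul_le_mul_of_nonneg_left ?_ (abs_nonneg _)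
          exact Real.rpow_le_one_of_one_le_of_nonpos (le_of_lt (mem_Ioi.mp ht))
            (by linarith)
      _ = |deriv φ t| := mul_one _

/-- If the principal value of the truncated Riesz transform exists at `x` (and the
truncations are uniformly bounded), then the principal value of the smoothly truncated
Riesz transform also exists at `x`. -/
theorem smooth_pv_exists_of_pv_exists (m : ℕ) (s C Cρ : ℝ) (hs : 0 < s)
    (μ : Measure (EuclideanSpace ℝ (Fin m))) [IsFiniteMeasure μ]
    (φ : ℝ → ℝ) (x : EuclideanSpace ℝ (Fin m))
    (hatom : μ {x} = 0)
    (hbound : ∃ B : ℝ, ∀ η : ℝ, 0 < η →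
      ‖∫ y in {y : EuclideanSpace ℝ (Fin m) | η < dist x y},
          (dist x y ^ (s + 1))⁻¹ • (x - y) ∂μ‖ ≤ B)
    (hlim : ∃ L : EuclideanSpace ℝ (Fin m),
      Tendsto (fun η : ℝ =>
          ∫ y in {y : EuclideanSpace ℝ (Fin m) | η < dist x y},
            (dist x y ^ (s + 1))⁻¹ • (x - y) ∂μ)
        (nhdsWithin 0 (Ioi 0)) (nhds L))
    (hφdiff : ContDiffOn ℝ 2 φ (Ioi 0))
    (hφeq : ∀ t ∈ Icc (0 : ℝ) 1, φ t = t ^ ((s + 1) / 2))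
    (hφsupp : HasCompactSupport φ)
    (hφbd : ∀ t : ℝ, |φ t| ≤ C)
    (hφ'int : IntegrableOn (fun t => |deriv φ t|) (Ioi (0 : ℝ))) :
    ∃ L' : EuclideanSpace ℝ (Fin m),
      Tendsto (fun ε : ℝ =>
          ∫ y, φ (dist x y ^ 2 / ε ^ 2) • ((dist x y ^ (s + 1))⁻¹ • (x - y)) ∂μ)
        (nhdsWithin 0 (Ioi 0)) (nhds L') := by
  classical
  obtain ⟨B, hB⟩ := hbound
  obtain ⟨L, hL⟩ := hlim
  set K : EuclideanSpace ℝ (Fin m) → EuclideanSpace ℝ (Fin m) :=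
    fun y => (dist x y ^ (s + 1))⁻¹ • (x - y) with hKdef
  have hKnorm : ∀ y, ‖K y‖ = dist x y ^ (-s) := by
    intro y
    rcases eq_or_lt_of_le (dist_nonneg (x := x) (y := y)) with h | h
    · rw [hKdef]
      simp only [← h, Real.zero_rpow (by positivity : s + 1 ≠ 0),
        Real.zero_rpow (neg_ne_zero.mpr (ne_of_gt hs)), inv_zero, zero_smul, norm_zero]
    · rw [hKdef, norm_smul, Real.norm_eq_abs, abs_inv,
        abs_of_pos (Real.rpow_pos_of_pos h _), ← dist_eq_norm,
        Real.rpow_neg (le_of_lt h), Real.rpow_add h, Real.rpow_one, mul_inv,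
        mul_assoc, inv_mul_cancel₀ (ne_of_gt h), mul_one]
  have hKmeas : StronglyMeasurable K := by
    apply Measurable.stronglyMeasurable
    have h1 : Measurable fun y : EuclideanSpace ℝ (Fin m) => (dist x y ^ (s + 1))⁻¹ := by
      fun_prop
    exact h1.smul (measurable_const.sub measurable_id)
  set R : ℝ → EuclideanSpace ℝ (Fin m) :=
    fun η => ∫ y in {y | η < dist x y}, K y ∂μ with hRdef
  have hopen : ∀ η : ℝ, IsOpen {y : EuclideanSpace ℝ (Fin m) | η < dist x y} :=
    fun η => isOpen_lt continuous_const (continuous_const.dist continuous_id)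
  have hRB : ∀ η : ℝ, 0 < η → ‖R η‖ ≤ B := fun η hη => hB η hη
  have hRlim : Tendsto R (nhdsWithin 0 (Ioi 0)) (nhds L) := hL
  have hRmeas : StronglyMeasurable R := by
    have hset : MeasurableSet {p : ℝ × EuclideanSpace ℝ (Fin m) | p.1 < dist x p.2} :=
      (isOpen_lt continuous_fst (continuous_const.dist continuous_snd)).measurableSet
    have hsm : StronglyMeasurable
        ({p : ℝ × EuclideanSpace ℝ (Fin m) | p.1 < dist x p.2}.indicator
          fun q => K q.2) :=
      (hKmeas.comp_measurable measurable_snd).indicator hset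
    have heq : R = fun η => ∫ y,
        ({p : ℝ × EuclideanSpace ℝ (Fin m) | p.1 < dist x p.2}.indicator
          (fun q => K q.2)) (η, y) ∂μ := by
      funext η
      show (∫ y in {y | η < dist x y}, K y ∂μ) = _
      rw [← integral_indicator (hopen η).measurableSet]
      congr 1
    rw [heq]
    exact hsm.integral_prod_right'
  -- the key identity
  have key : ∀ ε : ℝ, 0 < ε →
      (∫ y, φ (dist x y ^ 2 / ε ^ 2) • K y ∂μ)
        = ∫ t in Ioi (0:ℝ), deriv φ t • R (ε * Real.sqrt t) := by
    intro ε hε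
    set S : Set (EuclideanSpace ℝ (Fin m) × ℝ) :=
      {p | ε * Real.sqrt p.2 < dist x p.1 ∧ 0 < p.2} with hSdef
    have hSopen : IsOpen S := by
      apply IsOpen.inter
      · exact isOpen_lt (continuous_const.mul (Real.continuous_sqrt.comp continuous_snd))
          (continuous_const.dist continuous_fst)
      · exact isOpen_lt continuous_const continuous_snd
    set F : EuclideanSpace ℝ (Fin m) × ℝ → EuclideanSpace ℝ (Fin m) :=
      S.indicator (fun p => deriv φ p.2 • K p.1) with hFdef
    have hFmeas : StronglyMeasurable F :=
      ((((measurable_deriv φ).comp measurable_snd).stronglyMeasurable).smul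
        (hKmeas.comp_measurable measurable_fst)).indicator hSopen.measurableSet
    have hFbound : ∀ p : EuclideanSpace ℝ (Fin m) × ℝ,
        ‖F p‖ ≤ |deriv φ p.2| * (ε * Real.sqrt p.2) ^ (-s) := by
      rintro ⟨y, t⟩
      by_cases hp : (y, t) ∈ S
      · rw [hFdef, Set.indicator_of_mem hp, norm_smul, Real.norm_eq_abs, hKnorm]
        have h1 : 0 < ε * Real.sqrt t := mul_pos hε (Real.sqrt_pos.mpr hp.2)
        exact mul_le_mul_of_nonneg_left
          (Real.rpow_le_rpow_of_nonpos h1 hp.1.le (by linarith)) (abs_nonneg _)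
      · rw [hFdef, Set.indicator_of_notMem hp, norm_zero]
        positivity
    have hbint : IntegrableOn
        (fun t => |deriv φ t| * (ε * Real.sqrt t) ^ (-s)) (Ioi (0:ℝ)) := by
      have h3 : IntegrableOn
          (fun t : ℝ => ε ^ (-s) * (|deriv φ t| * t ^ (-s / 2))) (Ioi (0:ℝ)) :=
        (g_int hs hφeq hφ'int).const_mul (ε ^ (-s))
      apply h3.congr_fun ?_ measurableSet_Ioi
      intro t ht
      have ht0 : (0:ℝ) < t := ht
      show ε ^ (-s) * (|deriv φ t| * t ^ (-s / 2)) = |deriv φ t| * (ε * Real.sqrt t) ^ (-s)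
      rw [Real.mul_rpow hε.le (Real.sqrt_nonneg t), Real.sqrt_eq_rpow,
        ← Real.rpow_mul ht0.le, show ((1:ℝ)/2 * -s) = -s/2 from by ring]
      ring
    have hFint : Integrable F (μ.prod (volume.restrict (Ioi (0:ℝ)))) := by
      apply Integrable.mono'
        (g := fun p : EuclideanSpace ℝ (Fin m) × ℝ =>
          |deriv φ p.2| * (ε * Real.sqrt p.2) ^ (-s))
        ?_ hFmeas.aestronglyMeasurable (Eventually.of_forall hFbound)
      -- integrability of the bound on the product
      have hgm : Measurable (fun t : ℝ => |deriv φ t| * (ε * Real.sqrt t) ^ (-s)) :=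
        ((measurable_deriv φ).abs).mul (by fun_prop)
      have hmg : AEStronglyMeasurable
          (fun p : EuclideanSpace ℝ (Fin m) × ℝ =>
            |deriv φ p.2| * (ε * Real.sqrt p.2) ^ (-s))
          (μ.prod (volume.restrict (Ioi (0:ℝ)))) :=
        (hgm.comp measurable_snd).aestronglyMeasurable
      rw [MeasureTheory.integrable_prod_iff hmg]
      constructor
      · exact Eventually.of_forall fun y => hbint
      · exact (integrable_const (∫ t in Ioi (0:ℝ),
            ‖|deriv φ t| * (ε * Real.sqrt t) ^ (-s)‖ ∂volume)).congr
          (Eventually.of_forall fun y => rfl)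
    -- LHS equals iterated integral
    have hax : ∀ᵐ y ∂μ, y ≠ x := by
      rw [ae_iff]
      convert hatom using 2
      ext y
      simp [eq_comm]
    have lhs_eq : (∫ y, φ (dist x y ^ 2 / ε ^ 2) • K y ∂μ)
        = ∫ y, (∫ t in Ioi (0:ℝ), F (y, t)) ∂μ := by
      apply integral_congr_ae
      filter_upwards [hax] with y hy
      have hd : 0 < dist x y := dist_pos.mpr (Ne.symm hy)
      have hu : 0 < (dist x y / ε) ^ 2 := by positivity
      have hsec : (fun t => F (y, t))
          = (Ioo (0:ℝ) ((dist x y / ε) ^ 2)).indicator (fun t => deriv φ t • K y) := by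
        funext t
        have hiff : (y, t) ∈ S ↔ t ∈ Ioo (0:ℝ) ((dist x y / ε) ^ 2) := by
          simp only [hSdef, Set.mem_setOf_eq, Set.mem_Ioo]
          constructor
          · rintro ⟨h1, h2⟩
            refine ⟨h2, ?_⟩
            rw [← Real.sqrt_lt' (by positivity)]
            rw [lt_div_iff₀ hε]
            linarith [mul_comm ε (Real.sqrt t)]
          · rintro ⟨h1, h2⟩
            refine ⟨?_, h1⟩
            rw [← Real.sqrt_lt' (show 0 < dist x y / ε by positivity)] at h2
            rw [lt_div_iff₀ hε] at h2
            linarith [mul_comm ε (Real.sqrt t)]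
        by_cases hmem : (y, t) ∈ S
        · rw [hFdef, Set.indicator_of_mem hmem,
            Set.indicator_of_mem (hiff.mp hmem)]
        · rw [hFdef, Set.indicator_of_notMem hmem,
            Set.indicator_of_notMem (fun hc => hmem (hiff.mpr hc))]
      rw [hsec, setIntegral_indicator measurableSet_Ioo,
        Set.inter_eq_right.mpr (fun t ht => ht.1),
        integral_smul_const, ← integral_Ioc_eq_integral_Ioo,
        ftc_phi hs hφdiff hφeq hφ'int hu, div_pow]
    -- swap the integrals
    have swap : ∫ y, (∫ t in Ioi (0:ℝ), F (y, t)) ∂μ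
        = ∫ t in Ioi (0:ℝ), (∫ y, F (y, t) ∂μ) := by
      exact MeasureTheory.integral_integral_swap (f := fun y t => F (y, t)) hFint
    -- RHS
    have rhs_eq : (∫ t in Ioi (0:ℝ), (∫ y, F (y, t) ∂μ))
        = ∫ t in Ioi (0:ℝ), deriv φ t • R (ε * Real.sqrt t) := by
      apply integral_congr_ae
      filter_upwards [ae_restrict_mem measurableSet_Ioi] with t ht
      have hsec : (fun y => F (y, t))
          = ({y : EuclideanSpace ℝ (Fin m) | ε * Real.sqrt t < dist x y}).indicator
              (fun y => deriv φ t • K y) := by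
        funext y
        have hiff : (y, t) ∈ S ↔ ε * Real.sqrt t < dist x y := by
          simp only [hSdef, Set.mem_setOf_eq]
          exact ⟨fun h => h.1, fun h => ⟨h, ht⟩⟩
        by_cases hmem : (y, t) ∈ S
        · rw [hFdef, Set.indicator_of_mem hmem,
            Set.indicator_of_mem (show y ∈ {y : EuclideanSpace ℝ (Fin m) |
              ε * Real.sqrt t < dist x y} from hiff.mp hmem)]
        · rw [hFdef, Set.indicator_of_notMem hmem,
            Set.indicator_of_notMem (show y ∉ {y : EuclideanSpace ℝ (Fin m) |
              ε * Real.sqrt t < dist x y} from fun hc => hmem (hiff.mpr hc))]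
      rw [hsec, integral_indicator (hopen _).measurableSet, integral_smul]
    rw [lhs_eq, swap, rhs_eq]
  -- Step C: limit of the right-hand side
  have hG : Tendsto (fun ε : ℝ => ∫ t in Ioi (0:ℝ), deriv φ t • R (ε * Real.sqrt t))
      (nhdsWithin 0 (Ioi 0)) (nhds (∫ t in Ioi (0:ℝ), deriv φ t • L)) := by
    apply tendsto_integral_filter_of_dominated_convergence
      (fun t => |deriv φ t| * B)
    · apply Eventually.of_forall
      intro ε
      exact ((measurable_deriv φ).aestronglyMeasurable).smul
        ((hRmeas.comp_measurable (by fun_prop :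
          Measurable fun t : ℝ => ε * Real.sqrt t)).aestronglyMeasurable)
    · filter_upwards [self_mem_nhdsWithin] with ε hε
      filter_upwards [ae_restrict_mem measurableSet_Ioi] with t ht
      rw [norm_smul, Real.norm_eq_abs]
      exact mul_le_mul_of_nonneg_left
        (hRB _ (mul_pos hε (Real.sqrt_pos.mpr ht))) (abs_nonneg _)
    · exact hφ'int.mul_const B
    · filter_upwards [ae_restrict_mem measurableSet_Ioi] with t ht
      apply Filter.Tendsto.smul tendsto_const_nhds
      apply hRlim.comp
      refine tendsto_nhdsWithin_iff.mpr ⟨?_, ?_⟩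
      · have h0 : Tendsto (fun ε : ℝ => ε * Real.sqrt t) (nhds 0) (nhds 0) := by
          have := (continuous_id.mul (continuous_const (y := Real.sqrt t))).tendsto (0:ℝ)
          simpa [Pi.mul_def] using this
        exact h0.mono_left nhdsWithin_le_nhds
      · filter_upwards [self_mem_nhdsWithin] with ε hε
        exact mul_pos hε (Real.sqrt_pos.mpr ht)
  refine ⟨∫ t in Ioi (0:ℝ), deriv φ t • L, ?_⟩
  apply Tendsto.congr' ?_ hG
  filter_upwards [self_mem_nhdsWithin] with ε hε
  exact (key ε hε).symm
end

section
/- Pigeonhole doubling lemma: let s > 0, ρ > 0, 0 < c ≤ M < ∞, and let θ: (0,∞) → [0,∞) be defined by θ(t) = μ(B(0,t))/t^s for a measure μ satisfying θ(t) ≤ M for all t and θ(ε₁) ≥ c for some ε₁ > 0. Then there exists ω₀ = ω₀(s, ρ, M, c) ≥ 1 and ε with ε₁ ≤ ε ≤ ω₀ ε₁ such that θ(ε) ≥ c/2 and θ(t) ≤ (1+ρ²) θ(ε) for all t ∈ [ε, 4ε]. -/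
open MeasureTheory Metric Set Filter

/-- Pigeonhole doubling lemma for the average density `θ(t) = μ(B(0,t))/t^s`. -/
theorem density_doubling_scale (s ρ c M : ℝ) (hs : 0 < s) (hρ : 0 < ρ)
    (hc : 0 < c) (hcM : c ≤ M) :
    ∃ ω₀ : ℝ, 1 ≤ ω₀ ∧
      ∀ (m : ℕ) (μ : Measure (EuclideanSpace ℝ (Fin m))) (ε₁ : ℝ), 0 < ε₁ →
        (∀ t : ℝ, 0 < t →
          (μ (ball (0 : EuclideanSpace ℝ (Fin m)) t)).toReal / t ^ s ≤ M) →
        c ≤ (μ (ball (0 : EuclideanSpace ℝ (Fin m)) ε₁)).toReal / ε₁ ^ s →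
        ∃ ε : ℝ, ε₁ ≤ ε ∧ ε ≤ ω₀ * ε₁ ∧
          c / 2 ≤ (μ (ball (0 : EuclideanSpace ℝ (Fin m)) ε)).toReal / ε ^ s ∧
          ∀ t ∈ Icc ε (4 * ε),
            (μ (ball (0 : EuclideanSpace ℝ (Fin m)) t)).toReal / t ^ s
              ≤ (1 + ρ ^ 2) *
                ((μ (ball (0 : EuclideanSpace ℝ (Fin m)) ε)).toReal / ε ^ s) := by
  have h1 : (1 : ℝ) < 1 + ρ ^ 2 := by nlinarith
  obtain ⟨N, hN⟩ := pow_unbounded_of_one_lt (M / c) h1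
  refine ⟨4 ^ N, one_le_pow₀ (by norm_num), ?_⟩
  intro m μ ε₁ hε₁ hM hθc
  set θ : ℝ → ℝ := fun t => (μ (ball (0 : EuclideanSpace ℝ (Fin m)) t)).toReal / t ^ s with hθ
  have key : ∀ k : ℕ,
      (∃ ε, ε₁ ≤ ε ∧ ε ≤ 4 ^ k * ε₁ ∧ c / 2 ≤ θ ε ∧
        ∀ t ∈ Icc ε (4 * ε), θ t ≤ (1 + ρ ^ 2) * θ ε) ∨
      (∃ t, ε₁ ≤ t ∧ t ≤ 4 ^ k * ε₁ ∧ (1 + ρ ^ 2) ^ k * c ≤ θ t) := by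
    intro k
    induction k with
    | zero => exact Or.inr ⟨ε₁, le_refl _, by simp, by simpa using hθc⟩
    | succ k ih =>
      have h4 : (4:ℝ) ^ k * ε₁ ≤ 4 ^ (k+1) * ε₁ := by
        have : (4:ℝ) ^ k ≤ 4 ^ (k+1) := pow_le_pow_right₀ (by norm_num) (Nat.le_succ k)
        nlinarith
      rcases ih with ⟨ε, h1', h2', h3', h4'⟩ | ⟨t, ht1, ht2, ht3⟩
      · exact Or.inl ⟨ε, h1', h2'.trans h4, h3', h4'⟩
      · by_cases hgood : ∀ u ∈ Icc t (4 * t), θ u ≤ (1 + ρ ^ 2) * θ t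
        · refine Or.inl ⟨t, ht1, ht2.trans h4, ?_, hgood⟩
          have hpow : (1:ℝ) ≤ (1 + ρ ^ 2) ^ k := one_le_pow₀ h1.le
          nlinarith
        · push_neg at hgood
          obtain ⟨u, hu, hu'⟩ := hgood
          refine Or.inr ⟨u, ht1.trans hu.1, ?_, ?_⟩
          · calc u ≤ 4 * t := hu.2
              _ ≤ 4 * (4 ^ k * ε₁) := by nlinarith
              _ = 4 ^ (k+1) * ε₁ := by ring
          · have : (1 + ρ ^ 2) ^ k * c ≤ θ t := ht3
            calc (1 + ρ ^ 2) ^ (k+1) * c = (1 + ρ ^ 2) * ((1 + ρ ^ 2) ^ k * c) := by ring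
              _ ≤ (1 + ρ ^ 2) * θ t := by nlinarith
              _ ≤ θ u := hu'.le
  rcases key N with ⟨ε, h1', h2', h3', h4'⟩ | ⟨t, ht1, ht2, ht3⟩
  · exact ⟨ε, h1', h2', h3', h4'⟩
  · exfalso
    have hMt : θ t ≤ M := hM t (lt_of_lt_of_le hε₁ ht1)
    have : M < (1 + ρ ^ 2) ^ N * c := by
      have := (div_lt_iff₀ hc).mp hN
      linarith
    linarith
end

section
/- Error bound in the Taylor lemma: under the assumptions that μ is a Borel measure on ℝ^m with μ(B(0,t)) ≤ 2θ t^s for small t, that φ is as specified (φ(t) = t^{(s+1)/2} on [0,1], supp φ ⊂ [0,3], |φ| ≤ C, |φ'| ≤ 1/ρ, |φ''| ≤ C_ρ), and that |x| < ε/4, we have R^s_{φ,ε}μ(x) − R^s_{φ,ε}μ(0) = T^ε(x) + E(x), where T^ε(x) = ∫ |y|^{−(s+1)} [ φ(|y|²/ε²)(x − (s+1)(x·y)y/|y|²) + φ'(|y|²/ε²)·2(x·y)y/ε² ] dμ(y) is linear in x, and |E(x)| ≤ C₁ θ^s(3ε) |x|²/ε², with θ^s(3ε) = μ(B(0,3ε))/(3ε)^s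 and C₁ depending only on s, m, ρ, C, C_ρ. -/
open MeasureTheory Metric Set Filter

noncomputable section
namespace TaylorAux
open Real
open scoped RealInnerProductSpace

variable {F : Type*} [NormedAddCommGroup F] [InnerProductSpace ℝ F]

/-! ### Lemmas about φ -/

theorem phi_hasDerivAt {φ : ℝ → ℝ} (hφ : ContDiffOn ℝ 2 φ (Ioi 0)) {u : ℝ} (hu : 0 < u) :
    HasDerivAt φ (deriv φ u) u :=
  ((hφ.contDiffAt (Ioi_mem_nhds hu)).differentiableAt (by norm_num)).hasDerivAt

theorem dphi_contDiffOn {φ : ℝ → ℝ} (hφ : ContDiffOn ℝ 2 φ (Ioi 0)) :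
    ContDiffOn ℝ 1 (deriv φ) (Ioi 0) :=
  hφ.deriv_of_isOpen isOpen_Ioi (by norm_num)

theorem dphi_hasDerivAt {φ : ℝ → ℝ} (hφ : ContDiffOn ℝ 2 φ (Ioi 0)) {u : ℝ} (hu : 0 < u) :
    HasDerivAt (deriv φ) (deriv (deriv φ) u) u :=
  (((dphi_contDiffOn hφ).contDiffAt (Ioi_mem_nhds hu)).differentiableAt (by norm_num)).hasDerivAt

theorem dphi_continuousOn {φ : ℝ → ℝ} (hφ : ContDiffOn ℝ 2 φ (Ioi 0)) :
    ContinuousOn (deriv φ) (Ioi 0) :=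
  (dphi_contDiffOn hφ).continuousOn

theorem dphi_zero {φ : ℝ → ℝ} (hφ3 : ∀ t : ℝ, 3 < t → φ t = 0) {u : ℝ} (hu : 3 < u) :
    deriv φ u = 0 := by
  have h : φ =ᶠ[nhds u] (fun _ => (0:ℝ)) :=
    eventually_of_mem (Ioi_mem_nhds hu) (fun t ht => hφ3 t ht)
  rw [h.deriv_eq]; simp

theorem ddphi_zero {φ : ℝ → ℝ} (hφ3 : ∀ t : ℝ, 3 < t → φ t = 0) {u : ℝ} (hu : 3 < u) :
    deriv (deriv φ) u = 0 := by
  have h : deriv φ =ᶠ[nhds u] (fun _ => (0:ℝ)) :=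
    eventually_of_mem (Ioi_mem_nhds hu) (fun t ht => dphi_zero hφ3 ht)
  rw [h.deriv_eq]; simp

theorem dphi_small {s : ℝ} {φ : ℝ → ℝ} (hφ1 : ∀ t ∈ Icc (0:ℝ) 1, φ t = t ^ ((s+1)/2))
    {u : ℝ} (hu : u ∈ Ioo (0:ℝ) 1) :
    deriv φ u = (s+1)/2 * u ^ ((s+1)/2 - 1) := by
  have hev : φ =ᶠ[nhds u] (fun t => t ^ ((s+1)/2)) :=
    eventually_of_mem (Ioo_mem_nhds hu.1 hu.2) (fun t ht => hφ1 t (Ioo_subset_Icc_self ht))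
  rw [hev.deriv_eq, (Real.hasDerivAt_rpow_const (Or.inl hu.1.ne')).deriv]

/-! ### rpow helpers -/

theorem sq_rpow_inv {s : ℝ} (hs : 0 < s) (a : ℝ) (ha : 0 ≤ a) :
    ((a^2 : ℝ))^(-(s+1)/2) = (a^(s+1))⁻¹ := by
  rw [← Real.rpow_natCast a 2, ← Real.rpow_mul ha, ← Real.rpow_neg ha]
  norm_num
  congr 1
  ring

theorem sq_rpow_half (a : ℝ) (ha : 0 ≤ a) (s : ℝ) : ((a^2 : ℝ))^((s+1)/2) = a^(s+1) := by
  rw [← Real.rpow_natCast a 2, ← Real.rpow_mul ha]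
  congr 1
  push_cast
  ring

/-! ### The kernel and its linearization -/

def ker (s ε : ℝ) (φ : ℝ → ℝ) (v : F) : F := φ (‖v‖^2/ε^2) • ((‖v‖^(s+1))⁻¹ • v)

def lin (s ε : ℝ) (φ : ℝ → ℝ) (x y : F) : F :=
  (‖y‖^(s+1))⁻¹ • (φ (‖y‖^2/ε^2) • (x - ((s+1)*⟪x,y⟫/‖y‖^2) • y)
    + (deriv φ (‖y‖^2/ε^2) * (2*⟪x,y⟫/ε^2)) • y)

theorem ker_small {s ε : ℝ} (hs : 0 < s) (hε : 0 < ε) {φ : ℝ → ℝ}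
    (hφ1 : ∀ t ∈ Icc (0:ℝ) 1, φ t = t ^ ((s+1)/2)) (v : F) (hv : ‖v‖ ≤ ε) :
    ker s ε φ v = (ε^(s+1))⁻¹ • v := by
  rcases eq_or_ne v 0 with rfl | hv0
  · simp [ker]
  · have hvpos : 0 < ‖v‖ := norm_pos_iff.2 hv0
    have hu : ‖v‖^2/ε^2 ∈ Icc (0:ℝ) 1 := by
      constructor
      · positivity
      · rw [div_le_one (by positivity)]
        exact pow_le_pow_left₀ hvpos.le hv 2
    rw [ker, hφ1 _ hu, Real.div_rpow (by positivity) (by positivity),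
      sq_rpow_half _ (norm_nonneg v), sq_rpow_half _ hε.le, smul_smul]
    congr 1
    have h1 : (0:ℝ) < ‖v‖^(s+1) := Real.rpow_pos_of_pos hvpos _
    field_simp

theorem ker_big {s ε : ℝ} {φ : ℝ → ℝ} (hε : 0 < ε)
    (hφ3 : ∀ t : ℝ, 3 < t → φ t = 0) (v : F) (hv : 3*ε^2 < ‖v‖^2) :
    ker s ε φ v = 0 := by
  have h3 : (3:ℝ) < ‖v‖^2/ε^2 := by rw [lt_div_iff₀ (by positivity)]; linarith
  rw [ker, hφ3 _ h3, zero_smul]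

theorem lin_zero {s : ℝ} (hs : 0 < s) (ε : ℝ) (φ : ℝ → ℝ) (x : F) : lin s ε φ x (0 : F) = 0 := by
  simp [lin, Real.zero_rpow]
  exact Or.inl (Real.zero_rpow (by positivity))

theorem lin_big {s ε : ℝ} {φ : ℝ → ℝ} (hε : 0 < ε)
    (hφ3 : ∀ t : ℝ, 3 < t → φ t = 0) (x y : F) (hy : 3*ε^2 < ‖y‖^2) :
    lin s ε φ x y = 0 := by
  have h3 : (3:ℝ) < ‖y‖^2/ε^2 := by rw [lt_div_iff₀ (by positivity)]; linarith
  rw [lin, hφ3 _ h3, dphi_zero hφ3 h3]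
  simp

theorem lin_small {s ε : ℝ} (hs : 0 < s) (hε : 0 < ε) {φ : ℝ → ℝ}
    (hφ1 : ∀ t ∈ Icc (0:ℝ) 1, φ t = t ^ ((s+1)/2)) (x y : F) (hy0 : y ≠ 0)
    (hy : ‖y‖ ≤ ε/2) :
    lin s ε φ x y = (ε^(s+1))⁻¹ • x := by
  have hypos : 0 < ‖y‖ := norm_pos_iff.2 hy0
  set u : ℝ := ‖y‖^2/ε^2 with hu_def
  have hu : u ∈ Ioo (0:ℝ) 1 := by
    constructor
    · positivity
    · rw [div_lt_one (by positivity)]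
      nlinarith
  have h1 : φ u = u ^ ((s+1)/2) := hφ1 _ (Ioo_subset_Icc_self hu)
  have h2 : deriv φ u = (s+1)/2 * u ^ ((s+1)/2 - 1) := dphi_small hφ1 hu
  have h4 : u ^ ((s+1)/2) = u ^ ((s+1)/2 - 1) * u := by
    rw [← Real.rpow_add_one hu.1.ne']
    ring_nf
  have h3 : u ^ ((s+1)/2) = ‖y‖^(s+1) / ε^(s+1) := by
    rw [hu_def, Real.div_rpow (by positivity) (by positivity),
      sq_rpow_half _ (norm_nonneg y), sq_rpow_half _ hε.le]
  have ha : (0:ℝ) < ‖y‖^(s+1) := Real.rpow_pos_of_pos hypos _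
  have he1 : (0:ℝ) < ε^(s+1) := Real.rpow_pos_of_pos hε _
  have h34 : u ^ ((s+1)/2 - 1) * u = ‖y‖^(s+1)/ε^(s+1) := by rw [← h4, h3]
  unfold lin
  rw [h1, h2, h4]
  match_scalars
  · rw [hu_def] at h34 ⊢
    field_simp at h34 ⊢
    linarith
  · rw [hu_def]
    field_simp
    ring

/-! ### Functions along the segment and their derivatives -/

def zf (x y : F) (t : ℝ) : F := t • x - y

def qf (x y : F) (t : ℝ) : ℝ := ‖zf x y t‖^2

def ipf (x y : F) (t : ℝ) : ℝ := ⟪x, zf x y t⟫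

def uf (ε : ℝ) (x y : F) (t : ℝ) : ℝ := qf x y t / ε^2

def rf (s : ℝ) (x y : F) (t : ℝ) : ℝ := qf x y t ^ (-(s+1)/2)

def rf1 (s : ℝ) (x y : F) (t : ℝ) : ℝ :=
  (-(s+1)/2) * qf x y t ^ (-(s+1)/2 - 1) * (2 * ipf x y t)

def rf2 (s : ℝ) (x y : F) (t : ℝ) : ℝ :=
  (-(s+1)/2) * ((-(s+1)/2 - 1) * qf x y t ^ (-(s+1)/2 - 1 - 1) * (2 * ipf x y t)) * (2 * ipf x y t)
    + (-(s+1)/2) * qf x y t ^ (-(s+1)/2 - 1) * (2 * ‖x‖^2)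

def gf (s ε : ℝ) (φ : ℝ → ℝ) (x y : F) (t : ℝ) : F :=
  φ (uf ε x y t) • (rf s x y t • zf x y t)

def Vf (s : ℝ) (x y : F) (t : ℝ) : F := rf s x y t • x + rf1 s x y t • zf x y t

def Vf' (s : ℝ) (x y : F) (t : ℝ) : F :=
  rf1 s x y t • x + (rf1 s x y t • x + rf2 s x y t • zf x y t)

def gdf (s ε : ℝ) (φ : ℝ → ℝ) (x y : F) (t : ℝ) : F :=
  φ (uf ε x y t) • Vf s x y t
    + (deriv φ (uf ε x y t) * (2 * ipf x y t / ε^2)) • (rf s x y t • zf x y t)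

def gddf (s ε : ℝ) (φ : ℝ → ℝ) (x y : F) (t : ℝ) : F :=
  (φ (uf ε x y t) • Vf' s x y t
      + (deriv φ (uf ε x y t) * (2 * ipf x y t / ε^2)) • Vf s x y t)
    + ((deriv φ (uf ε x y t) * (2 * ipf x y t / ε^2)) • Vf s x y t
      + (deriv (deriv φ) (uf ε x y t) * (2 * ipf x y t / ε^2) * (2 * ipf x y t / ε^2)
          + deriv φ (uf ε x y t) * (2 * ‖x‖^2 / ε^2)) • (rf s x y t • zf x y t))

theorem hasDerivAt_zf (x y : F) (t : ℝ) : HasDerivAt (zf x y) x t := by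
  have h := ((hasDerivAt_id t).smul_const x).sub_const y; rw [one_smul] at h; exact h

theorem ipf_eq (x y : F) (t : ℝ) : ipf x y t = t*‖x‖^2 - ⟪x,y⟫ := by
  simp [ipf, zf, inner_sub_right, real_inner_smul_right, real_inner_self_eq_norm_sq]

theorem hasDerivAt_ipf (x y : F) (t : ℝ) : HasDerivAt (ipf x y) (‖x‖^2) t := by
  have : ipf x y = fun t => t*‖x‖^2 - ⟪x,y⟫ := funext fun t => ipf_eq x y t
  rw [this]
  simpa using (hasDerivAt_mul_const (‖x‖^2)).sub_const (⟪x,y⟫)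

theorem qf_eq (x y : F) (t : ℝ) : qf x y t = ‖x‖^2 * t^2 - 2*⟪x,y⟫*t + ‖y‖^2 := by
  rw [qf, zf, norm_sub_sq_real]
  simp [norm_smul, real_inner_smul_left, mul_pow, sq_abs]
  ring

theorem hasDerivAt_qf (x y : F) (t : ℝ) : HasDerivAt (qf x y) (2 * ipf x y t) t := by
  have h : qf x y = fun t => ‖x‖^2 * t^2 - 2*⟪x,y⟫*t + ‖y‖^2 := funext fun t => qf_eq x y t
  rw [h]
  have h2 := (((hasDerivAt_pow 2 t).const_mul (‖x‖^2)).sub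
    ((hasDerivAt_id t).const_mul (2*⟪x,y⟫))).add_const (‖y‖^2)
  refine h2.congr_deriv ?_
  rw [ipf_eq]; push_cast; ring

theorem hasDerivAt_uf {ε : ℝ} (x y : F) (t : ℝ) :
    HasDerivAt (uf ε x y) (2 * ipf x y t / ε^2) t :=
  (hasDerivAt_qf x y t).div_const (ε^2)

theorem hasDerivAt_rf {s : ℝ} {x y : F} {t : ℝ} (h : qf x y t ≠ 0) :
    HasDerivAt (rf s x y) (rf1 s x y t) t := by
  have := (Real.hasDerivAt_rpow_const (p := -(s+1)/2) (Or.inl h)).comp t (hasDerivAt_qf x y t)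
  exact this

theorem hasDerivAt_rf1 {s : ℝ} {x y : F} {t : ℝ} (h : qf x y t ≠ 0) :
    HasDerivAt (rf1 s x y) (rf2 s x y t) t := by
  have h1 : HasDerivAt (fun t => (-(s+1)/2) * qf x y t ^ (-(s+1)/2 - 1))
      ((-(s+1)/2) * ((-(s+1)/2 - 1) * qf x y t ^ (-(s+1)/2 - 1 - 1) * (2 * ipf x y t))) t := by
    exact ((Real.hasDerivAt_rpow_const (p := -(s+1)/2 - 1) (Or.inl h)).comp t
      (hasDerivAt_qf x y t)).const_mul _
  have h2 : HasDerivAt (fun t => 2 * ipf x y t) (2 * ‖x‖^2) t :=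
    (hasDerivAt_ipf x y t).const_mul 2
  have := h1.mul h2
  exact this

theorem hasDerivAt_gf {s ε : ℝ} {φ : ℝ → ℝ} (hφ : ContDiffOn ℝ 2 φ (Ioi 0)) {x y : F} {t : ℝ}
    (hq : 0 < qf x y t) (hε : 0 < ε) :
    HasDerivAt (gf s ε φ x y) (gdf s ε φ x y t) t := by
  have hu : 0 < uf ε x y t := by rw [uf]; positivity
  have hc : HasDerivAt (fun t => φ (uf ε x y t))
      (deriv φ (uf ε x y t) * (2 * ipf x y t / ε^2)) t :=
    (phi_hasDerivAt hφ hu).comp t (hasDerivAt_uf x y t)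
  have hf : HasDerivAt (fun t => rf s x y t • zf x y t)
      (rf s x y t • x + rf1 s x y t • zf x y t) t :=
    (hasDerivAt_rf hq.ne').smul (hasDerivAt_zf x y t)
  exact hc.smul hf

theorem hasDerivAt_gdf {s ε : ℝ} {φ : ℝ → ℝ} (hφ : ContDiffOn ℝ 2 φ (Ioi 0)) {x y : F} {t : ℝ}
    (hq : 0 < qf x y t) (hε : 0 < ε) :
    HasDerivAt (gdf s ε φ x y) (gddf s ε φ x y t) t := by
  have hu : 0 < uf ε x y t := by rw [uf]; positivity
  have huderiv := hasDerivAt_uf (ε := ε) x y t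
  have hc : HasDerivAt (fun t => φ (uf ε x y t))
      (deriv φ (uf ε x y t) * (2 * ipf x y t / ε^2)) t :=
    (phi_hasDerivAt hφ hu).comp t huderiv
  have hdc : HasDerivAt (fun t => deriv φ (uf ε x y t))
      (deriv (deriv φ) (uf ε x y t) * (2 * ipf x y t / ε^2)) t :=
    (dphi_hasDerivAt hφ hu).comp t huderiv
  have hV : HasDerivAt (Vf s x y) (Vf' s x y t) t :=
    ((hasDerivAt_rf hq.ne').smul_const x).add ((hasDerivAt_rf1 hq.ne').smul (hasDerivAt_zf x y t))
  have hB : HasDerivAt (fun t => 2 * ipf x y t / ε^2) (2 * ‖x‖^2 / ε^2) t :=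
    ((hasDerivAt_ipf x y t).const_mul 2).div_const (ε^2)
  have hterm1 : HasDerivAt (fun t => φ (uf ε x y t) • Vf s x y t)
      (φ (uf ε x y t) • Vf' s x y t
        + (deriv φ (uf ε x y t) * (2 * ipf x y t / ε^2)) • Vf s x y t) t := hc.smul hV
  have hd : HasDerivAt (fun t => deriv φ (uf ε x y t) * (2 * ipf x y t / ε^2))
      (deriv (deriv φ) (uf ε x y t) * (2 * ipf x y t / ε^2) * (2 * ipf x y t / ε^2)
        + deriv φ (uf ε x y t) * (2 * ‖x‖^2 / ε^2)) t := hdc.mul hB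
  have hW : HasDerivAt (fun t => rf s x y t • zf x y t) (Vf s x y t) t :=
    (hasDerivAt_rf hq.ne').smul (hasDerivAt_zf x y t)
  have hterm2 := hd.smul hW
  exact (hterm1.add hterm2 : _)

/-! ### Boundary values -/

theorem gf_one {s ε : ℝ} (hs : 0 < s) (φ : ℝ → ℝ) (x y : F) :
    gf s ε φ x y 1 = ker s ε φ (x - y) := by
  have hz : zf x y 1 = x - y := by simp [zf]
  have hq : qf x y 1 = ‖x - y‖^2 := by rw [qf, hz]
  have hr : rf s x y 1 = (‖x - y‖^(s+1))⁻¹ := by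
    rw [rf, hq, sq_rpow_inv hs _ (norm_nonneg _)]
  simp only [gf, uf]
  rw [hz, hq, hr, ker]

theorem gf_zero {s ε : ℝ} (hs : 0 < s) (φ : ℝ → ℝ) (x y : F) :
    gf s ε φ x y 0 = ker s ε φ ((0:F) - y) := by
  have hz : zf x y 0 = (0:F) - y := by simp [zf]
  have hq : qf x y 0 = ‖(0:F) - y‖^2 := by rw [qf, hz]
  have hr : rf s x y 0 = (‖(0:F) - y‖^(s+1))⁻¹ := by
    rw [rf, hq, sq_rpow_inv hs _ (norm_nonneg _)]
  simp only [gf, uf]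
  rw [hz, hq, hr, ker]

theorem gdf_zero {s ε : ℝ} (hs : 0 < s) (hε : 0 < ε) (φ : ℝ → ℝ) (x y : F) (hy : y ≠ 0) :
    gdf s ε φ x y 0 = lin s ε φ x y := by
  have hy0 : (0:ℝ) < ‖y‖ := norm_pos_iff.2 hy
  have hy2 : (0:ℝ) < ‖y‖^2 := by positivity
  have hz : zf x y 0 = -y := by simp [zf]
  have hq : qf x y 0 = ‖y‖^2 := by rw [qf, hz, norm_neg]
  have hip : ipf x y 0 = -⟪x,y⟫ := by rw [ipf, hz, inner_neg_right]
  have hrf : (‖y‖^2:ℝ) ^ (-(s+1)/2) = (‖y‖^(s+1))⁻¹ := sq_rpow_inv hs _ (norm_nonneg y)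
  have hr1 : (‖y‖^2:ℝ) ^ (-(s+1)/2 - 1) = (‖y‖^(s+1))⁻¹ / ‖y‖^2 := by
    rw [Real.rpow_sub hy2, Real.rpow_one, hrf]
  simp only [gdf, Vf, lin, rf1, rf, uf, hz, hq, hip, hrf, hr1]
  have h1 : (0:ℝ) < ‖y‖^(s+1) := Real.rpow_pos_of_pos hy0 _
  match_scalars
  · field_simp
  · field_simp

/-! ### The constant -/

def Kc (s ρ C Cρ : ℝ) : ℝ :=
  (16:ℝ)^((s+1)/2) * (C*((s+1)*(2048*(s+3)+96)) + (8/ρ)*(64*(s+1)+1) + (32*Cρ + 4/ρ))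

theorem Kc_pos {s ρ C Cρ : ℝ} (hs : 0 < s) (hρ : 0 < ρ) (hC : 0 < C) (hCρ : 0 < Cρ) :
    0 < Kc s ρ C Cρ := by
  have h16 : (0:ℝ) < (16:ℝ)^((s+1)/2) := Real.rpow_pos_of_pos (by norm_num) _
  have : 0 < C*((s+1)*(2048*(s+3)+96)) := by positivity
  have : 0 < (8/ρ)*(64*(s+1)+1) := by positivity
  have : 0 < 32*Cρ + 4/ρ := by positivity
  rw [Kc]
  positivity

theorem gddf_zero_of_big {s ε : ℝ} {φ : ℝ → ℝ} (hφ3 : ∀ t : ℝ, 3 < t → φ t = 0)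
    {x y : F} {t : ℝ} (h3 : 3 < uf ε x y t) : gddf s ε φ x y t = 0 := by
  rw [gddf, hφ3 _ h3, dphi_zero hφ3 h3, ddphi_zero hφ3 h3]
  simp

/-! ### rpow bounds -/

theorem Dpow {ε : ℝ} (hε : 0 < ε) (e : ℝ) : ((ε^2/16 : ℝ))^e = ε^(2*e) / 16^e := by
  rw [Real.div_rpow (by positivity) (by norm_num), ← Real.rpow_natCast ε 2,
    ← Real.rpow_mul hε.le]
  norm_num [mul_comm]

theorem D0eq {s ε : ℝ} (hε : 0 < ε) :
    ((ε^2/16 : ℝ))^(-(s+1)/2) = (16:ℝ)^((s+1)/2) * (ε * ε^(-(s+2))) := by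
  rw [Dpow hε, show 2*(-(s+1)/2) = -(s+2)+1 by ring, Real.rpow_add hε, Real.rpow_one,
    show -(s+1)/2 = -((s+1)/2) by ring, Real.rpow_neg (by norm_num : (0:ℝ) ≤ 16)]
  have : (0:ℝ) < (16:ℝ)^((s+1)/2) := Real.rpow_pos_of_pos (by norm_num) _
  field_simp

theorem D1eq {s ε : ℝ} (hε : 0 < ε) :
    ((ε^2/16 : ℝ))^(-(s+1)/2 - 1) = 16*(16:ℝ)^((s+1)/2) * (ε^(-(s+2))/ε) := by
  have hD : (0:ℝ) < ε^2/16 := by positivity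
  have e1 : ((ε^2/16 : ℝ))^(-(s+1)/2 - 1) = ((ε^2/16 : ℝ))^(-(s+1)/2) / (ε^2/16) := by
    rw [Real.rpow_sub hD, Real.rpow_one]
  have hc : (0:ℝ) < (16:ℝ)^((s+1)/2) := Real.rpow_pos_of_pos (by norm_num) _
  have hP : (0:ℝ) < ε^(-(s+2)) := Real.rpow_pos_of_pos hε _
  rw [e1, D0eq hε]
  field_simp

theorem D2eq {s ε : ℝ} (hε : 0 < ε) :
    ((ε^2/16 : ℝ))^(-(s+1)/2 - 1 - 1) = 256*(16:ℝ)^((s+1)/2) * (ε^(-(s+2))/ε^3) := by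
  have hD : (0:ℝ) < ε^2/16 := by positivity
  have e1 : ((ε^2/16 : ℝ))^(-(s+1)/2 - 1 - 1) = ((ε^2/16 : ℝ))^(-(s+1)/2 - 1) / (ε^2/16) := by
    rw [Real.rpow_sub hD, Real.rpow_one]
  have hc : (0:ℝ) < (16:ℝ)^((s+1)/2) := Real.rpow_pos_of_pos (by norm_num) _
  have hP : (0:ℝ) < ε^(-(s+2)) := Real.rpow_pos_of_pos hε _
  rw [e1, D1eq hε]
  field_simp
  ring

set_option maxHeartbeats 1000000 in
theorem gddf_bound {s ρ C Cρ ε : ℝ} (hs : 0 < s) (hρ : 0 < ρ) (hC : 0 < C) (hCρ : 0 < Cρ)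
    (hε : 0 < ε) {φ : ℝ → ℝ}
    (hφC : ∀ t : ℝ, |φ t| ≤ C) (hφ' : ∀ t : ℝ, |deriv φ t| ≤ 1/ρ)
    (hφ'' : ∀ t : ℝ, |deriv (deriv φ) t| ≤ Cρ) (hφ3 : ∀ t : ℝ, 3 < t → φ t = 0)
    {x y : F} {t : ℝ} (hN : ε/4 ≤ ‖zf x y t‖) :
    ‖gddf s ε φ x y t‖ ≤ Kc s ρ C Cρ * ‖x‖^2 * ε^(-(s+2)) := by
  have hKc : 0 < Kc s ρ C Cρ := Kc_pos hs hρ hC hCρ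
  have hPpos : (0:ℝ) < ε^(-(s+2)) := Real.rpow_pos_of_pos hε _
  by_cases h3 : uf ε x y t ≤ 3
  swap
  · rw [gddf_zero_of_big hφ3 (lt_of_not_ge h3), norm_zero]
    positivity
  have hcpos : (0:ℝ) < (16:ℝ)^((s+1)/2) := Real.rpow_pos_of_pos (by norm_num) _
  set A := ‖x‖ with hA
  set N := ‖zf x y t‖ with hNdef
  set c := (16:ℝ)^((s+1)/2) with hc_def
  set P := ε^(-(s+2)) with hP_def
  have hApos : 0 ≤ A := norm_nonneg _
  have hNpos : 0 < N := lt_of_lt_of_le (by positivity) hN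
  have hq_eq : qf x y t = N^2 := by rw [hNdef]; rfl
  have hq_lb : ε^2/16 ≤ qf x y t := by rw [hq_eq]; nlinarith
  have hqpos : 0 < qf x y t := lt_of_lt_of_le (by positivity) hq_lb
  have hq_ub : qf x y t ≤ 3*ε^2 := by
    simp only [uf] at h3
    calc qf x y t = (qf x y t/ε^2) * ε^2 := by field_simp
      _ ≤ 3*ε^2 := by nlinarith [sq_nonneg ε]
  have hN2 : N ≤ 2*ε := by nlinarith [hq_eq ▸ hq_ub]
  have hip : |ipf x y t| ≤ A * (2*ε) := by
    calc |ipf x y t| ≤ ‖x‖ * ‖zf x y t‖ := abs_real_inner_le_norm _ _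
      _ ≤ A * (2*ε) := by rw [← hA, ← hNdef]; nlinarith
  have hip2 : |2 * ipf x y t| ≤ 4*A*ε := by
    rw [abs_mul, abs_two]
    calc 2 * |ipf x y t| ≤ 2 * (A * (2*ε)) := by linarith
      _ = 4*A*ε := by ring
  have hip3 : |2 * ipf x y t / ε^2| ≤ 4*A/ε := by
    rw [abs_div, abs_of_nonneg (by positivity : (0:ℝ) ≤ ε^2)]
    rw [div_le_div_iff₀ (by positivity) hε]
    calc |2 * ipf x y t| * ε ≤ (4*A*ε) * ε := by
          exact mul_le_mul_of_nonneg_right hip2 hε.le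
      _ = 4*A*ε^2 := by ring
      _ ≤ 4*A*ε^2 := le_rfl
  -- rpow bounds
  have hD0 : qf x y t ^ (-(s+1)/2) ≤ c * (ε*P) := by
    calc qf x y t ^ (-(s+1)/2) ≤ (ε^2/16) ^ (-(s+1)/2) :=
          Real.rpow_le_rpow_of_nonpos (by positivity) hq_lb (by linarith)
      _ = c * (ε*P) := D0eq hε
  have hD1 : qf x y t ^ (-(s+1)/2 - 1) ≤ 16*c*(P/ε) := by
    calc qf x y t ^ (-(s+1)/2 - 1) ≤ (ε^2/16) ^ (-(s+1)/2 - 1) :=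
          Real.rpow_le_rpow_of_nonpos (by positivity) hq_lb (by linarith)
      _ = 16*c*(P/ε) := D1eq hε
  have hD2 : qf x y t ^ (-(s+1)/2 - 1 - 1) ≤ 256*c*(P/ε^3) := by
    calc qf x y t ^ (-(s+1)/2 - 1 - 1) ≤ (ε^2/16) ^ (-(s+1)/2 - 1 - 1) :=
          Real.rpow_le_rpow_of_nonpos (by positivity) hq_lb (by linarith)
      _ = 256*c*(P/ε^3) := D2eq hε
  -- scalar bounds
  have habs_p : |(-(s+1)/2 : ℝ)| = (s+1)/2 := by
    rw [abs_div, abs_neg, abs_of_nonneg (by linarith : (0:ℝ) ≤ s+1), abs_two]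
  have habs_p1 : |(-(s+1)/2 - 1 : ℝ)| = (s+1)/2 + 1 := by
    rw [abs_of_nonpos (by linarith : (-(s+1)/2 - 1 : ℝ) ≤ 0)]; ring
  have hr0_b : |rf s x y t| ≤ c * (ε*P) := by
    simp only [rf]
    rw [abs_of_nonneg (Real.rpow_nonneg hqpos.le _)]
    exact hD0
  have hr1_b : |rf1 s x y t| ≤ (s+1)/2 * (16*c*(P/ε)) * (4*A*ε) := by
    simp only [rf1]
    rw [abs_mul, abs_mul, habs_p, abs_of_nonneg (Real.rpow_nonneg hqpos.le _)]
    exact mul_le_mul (mul_le_mul_of_nonneg_left hD1 (by linarith)) hip2 (abs_nonneg _)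
      (by positivity)
  have hr2_b : |rf2 s x y t| ≤
      ((s+1)/2 * (((s+1)/2+1) * (256*c*(P/ε^3)) * (4*A*ε))) * (4*A*ε)
        + ((s+1)/2 * (16*c*(P/ε))) * (2*A^2) := by
    have e2A : |(2 * ‖x‖^2 : ℝ)| = 2*A^2 := by
      rw [abs_of_nonneg (by positivity), hA]
    have term2 : |(-(s+1)/2) * qf x y t ^ (-(s+1)/2 - 1) * (2*‖x‖^2)|
        ≤ ((s+1)/2 * (16*c*(P/ε))) * (2*A^2) := by
      rw [abs_mul, abs_mul, habs_p, abs_of_nonneg (Real.rpow_nonneg hqpos.le _), e2A]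
      exact mul_le_mul (mul_le_mul_of_nonneg_left hD1 (by linarith)) le_rfl (by positivity)
        (by positivity)
    have term1 : |(-(s+1)/2) * ((-(s+1)/2 - 1) * qf x y t ^ (-(s+1)/2 - 1 - 1)
          * (2 * ipf x y t)) * (2 * ipf x y t)|
        ≤ ((s+1)/2 * (((s+1)/2+1) * (256*c*(P/ε^3)) * (4*A*ε))) * (4*A*ε) := by
      rw [abs_mul, abs_mul, habs_p, abs_mul, abs_mul, habs_p1,
        abs_of_nonneg (Real.rpow_nonneg hqpos.le _)]
      refine mul_le_mul (mul_le_mul_of_nonneg_left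
        (mul_le_mul (mul_le_mul_of_nonneg_left hD2 (by linarith)) hip2 (abs_nonneg _)
          (by positivity)) (by linarith)) hip2 (abs_nonneg _) (by positivity)
    simp only [rf2]
    exact (abs_add_le _ _).trans (add_le_add term1 term2)
  -- vector bounds
  have hVb : ‖Vf s x y t‖ ≤ (c*(ε*P))*A + ((s+1)/2 * (16*c*(P/ε)) * (4*A*ε))*(2*ε) := by
    rw [Vf]
    refine (norm_add_le _ _).trans (add_le_add ?_ ?_)
    · rw [norm_smul, Real.norm_eq_abs]
      exact mul_le_mul hr0_b le_rfl hApos (by positivity)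
    · rw [norm_smul, Real.norm_eq_abs]
      exact mul_le_mul hr1_b hN2 hNpos.le (by positivity)
  have hV'b : ‖Vf' s x y t‖ ≤ ((s+1)/2 * (16*c*(P/ε)) * (4*A*ε))*A
      + (((s+1)/2 * (16*c*(P/ε)) * (4*A*ε))*A
        + (((s+1)/2 * (((s+1)/2+1) * (256*c*(P/ε^3)) * (4*A*ε))) * (4*A*ε)
            + ((s+1)/2 * (16*c*(P/ε))) * (2*A^2))*(2*ε)) := by
    rw [Vf']
    refine (norm_add_le _ _).trans (add_le_add ?_ ((norm_add_le _ _).trans (add_le_add ?_ ?_)))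
    · rw [norm_smul, Real.norm_eq_abs]
      exact mul_le_mul hr1_b le_rfl hApos (by positivity)
    · rw [norm_smul, Real.norm_eq_abs]
      exact mul_le_mul hr1_b le_rfl hApos (by positivity)
    · rw [norm_smul, Real.norm_eq_abs]
      exact mul_le_mul hr2_b hN2 hNpos.le (by positivity)
  have hWb : ‖rf s x y t • zf x y t‖ ≤ (c*(ε*P))*(2*ε) := by
    rw [norm_smul, Real.norm_eq_abs]
    exact mul_le_mul hr0_b hN2 hNpos.le (by positivity)
  -- coefficient bounds
  have hco1 : |φ (uf ε x y t)| ≤ C := hφC _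
  have hco2 : |deriv φ (uf ε x y t) * (2 * ipf x y t / ε^2)| ≤ (1/ρ) * (4*A/ε) := by
    rw [abs_mul]
    exact mul_le_mul (hφ' _) hip3 (abs_nonneg _) (by positivity)
  have hco3 : |deriv (deriv φ) (uf ε x y t) * (2 * ipf x y t / ε^2) * (2 * ipf x y t / ε^2)
      + deriv φ (uf ε x y t) * (2 * ‖x‖^2 / ε^2)|
      ≤ Cρ * (4*A/ε) * (4*A/ε) + (1/ρ) * (2*A^2/ε^2) := by
    refine (abs_add_le _ _).trans (add_le_add ?_ ?_)
    · rw [abs_mul, abs_mul]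
      refine mul_le_mul (mul_le_mul (hφ'' _) hip3 (abs_nonneg _) hCρ.le) hip3 (abs_nonneg _) ?_
      positivity
    · rw [abs_mul]
      have h2 : |2 * ‖x‖^2 / ε^2| = 2*A^2/ε^2 := by
        rw [abs_div, abs_of_nonneg (by positivity : (0:ℝ) ≤ 2*‖x‖^2),
          abs_of_nonneg (by positivity : (0:ℝ) ≤ ε^2), hA]
      rw [h2]
      exact mul_le_mul (hφ' _) le_rfl (by positivity) (by positivity)
  -- assembly
  clear_value A N c P
  calc ‖gddf s ε φ x y t‖
      ≤ |φ (uf ε x y t)| * ‖Vf' s x y t‖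
          + |deriv φ (uf ε x y t) * (2 * ipf x y t / ε^2)| * ‖Vf s x y t‖
        + (|deriv φ (uf ε x y t) * (2 * ipf x y t / ε^2)| * ‖Vf s x y t‖
          + |deriv (deriv φ) (uf ε x y t) * (2 * ipf x y t / ε^2) * (2 * ipf x y t / ε^2)
              + deriv φ (uf ε x y t) * (2 * ‖x‖^2 / ε^2)| * ‖rf s x y t • zf x y t‖) := by
        simp only [gddf]
        refine (norm_add_le _ _).trans (add_le_add ?_ ?_)
        · refine (norm_add_le _ _).trans ?_
          rw [norm_smul, norm_smul, Real.norm_eq_abs, Real.norm_eq_abs]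
        · refine (norm_add_le _ _).trans ?_
          rw [norm_smul, norm_smul, Real.norm_eq_abs, Real.norm_eq_abs]
    _ ≤ C * (((s+1)/2 * (16*c*(P/ε)) * (4*A*ε))*A
          + (((s+1)/2 * (16*c*(P/ε)) * (4*A*ε))*A
            + (((s+1)/2 * (((s+1)/2+1) * (256*c*(P/ε^3)) * (4*A*ε))) * (4*A*ε)
                + ((s+1)/2 * (16*c*(P/ε))) * (2*A^2))*(2*ε)))
        + ((1/ρ) * (4*A/ε)) * ((c*(ε*P))*A + ((s+1)/2 * (16*c*(P/ε)) * (4*A*ε))*(2*ε))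
        + (((1/ρ) * (4*A/ε)) * ((c*(ε*P))*A + ((s+1)/2 * (16*c*(P/ε)) * (4*A*ε))*(2*ε))
          + (Cρ * (4*A/ε) * (4*A/ε) + (1/ρ) * (2*A^2/ε^2)) * ((c*(ε*P))*(2*ε))) := by
        refine add_le_add (add_le_add ?_ ?_) (add_le_add ?_ ?_)
        · exact mul_le_mul hco1 hV'b (norm_nonneg _) hC.le
        · exact mul_le_mul hco2 hVb (norm_nonneg _) (by positivity)
        · exact mul_le_mul hco2 hVb (norm_nonneg _) (by positivity)
        · exact mul_le_mul hco3 hWb (norm_nonneg _) (by positivity)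
    _ = Kc s ρ C Cρ * A^2 * P := by
        rw [Kc, ← hc_def]
        field_simp
        ring

theorem key {s ρ C Cρ ε : ℝ} (hs : 0 < s) (hρ : 0 < ρ) (hC : 0 < C) (hCρ : 0 < Cρ) (hε : 0 < ε)
    {φ : ℝ → ℝ} (hφ : ContDiffOn ℝ 2 φ (Ioi 0))
    (hφC : ∀ t : ℝ, |φ t| ≤ C) (hφ' : ∀ t : ℝ, |deriv φ t| ≤ 1/ρ)
    (hφ'' : ∀ t : ℝ, |deriv (deriv φ) t| ≤ Cρ) (hφ3 : ∀ t : ℝ, 3 < t → φ t = 0)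
    (x y : F) (hx : ‖x‖ < ε/4) (hy : ε/2 < ‖y‖) :
    ‖ker s ε φ (x - y) - ker s ε φ ((0:F) - y) - lin s ε φ x y‖
      ≤ Kc s ρ C Cρ * ‖x‖^2 * ε^(-(s+2)) := by
  have hy0 : y ≠ 0 := by
    intro h; rw [h, norm_zero] at hy; linarith
  have hKc : 0 < Kc s ρ C Cρ := Kc_pos hs hρ hC hCρ
  have hPpos : (0:ℝ) < ε^(-(s+2)) := Real.rpow_pos_of_pos hε _
  set M := Kc s ρ C Cρ * ‖x‖^2 * ε^(-(s+2)) with hM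
  have hM0 : 0 ≤ M := by positivity
  have hNlb : ∀ t ∈ Icc (0:ℝ) 1, ε/4 ≤ ‖zf x y t‖ := by
    intro t ht
    have h1 : ‖zf x y t‖ = ‖y - t • x‖ := by rw [zf, norm_sub_rev]
    have h2 : ‖y‖ - ‖t • x‖ ≤ ‖y - t • x‖ := norm_sub_norm_le _ _
    have h4 : |t| ≤ 1 := abs_le.2 ⟨by linarith [ht.1], ht.2⟩
    have h5 : ‖t • x‖ ≤ ε/4 := by
      rw [norm_smul, Real.norm_eq_abs]
      calc |t| * ‖x‖ ≤ 1 * (ε/4) :=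
            mul_le_mul h4 hx.le (norm_nonneg _) zero_le_one
        _ = ε/4 := one_mul _
    rw [h1]; linarith
  have hqpos : ∀ t ∈ Icc (0:ℝ) 1, 0 < qf x y t := by
    intro t ht
    have h := hNlb t ht
    have h2 : qf x y t = ‖zf x y t‖^2 := rfl
    nlinarith
  have happ1 : ∀ t ∈ Icc (0:ℝ) 1, ‖gdf s ε φ x y t - gdf s ε φ x y 0‖ ≤ M * (t - 0) :=
    norm_image_sub_le_of_norm_deriv_le_segment'
      (fun t ht => (hasDerivAt_gdf hφ (hqpos t ht) hε).hasDerivWithinAt)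
      (fun t ht => gddf_bound hs hρ hC hCρ hε hφC hφ' hφ'' hφ3
        (hNlb t (Ico_subset_Icc_self ht)))
  have happ2 : ∀ t ∈ Icc (0:ℝ) 1,
      ‖(gf s ε φ x y t - t • gdf s ε φ x y 0)
        - (gf s ε φ x y 0 - (0:ℝ) • gdf s ε φ x y 0)‖ ≤ M * (t - 0) := by
    refine norm_image_sub_le_of_norm_deriv_le_segment'
      (f' := fun t => gdf s ε φ x y t - gdf s ε φ x y 0) (fun t ht => ?_) (fun t ht => ?_)
    · have h1 : HasDerivAt (fun t : ℝ => t • gdf s ε φ x y 0) (gdf s ε φ x y 0) t := by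
        simpa using (hasDerivAt_id t).smul_const (gdf s ε φ x y 0)
      exact ((hasDerivAt_gf hφ (hqpos t ht) hε).sub h1).hasDerivWithinAt
    · have h2 := happ1 t (Ico_subset_Icc_self ht)
      have ht2 : t - 0 ≤ 1 := by linarith [ht.2]
      calc ‖gdf s ε φ x y t - gdf s ε φ x y 0‖ ≤ M * (t - 0) := h2
        _ ≤ M := by nlinarith
  have h10 := happ2 1 (right_mem_Icc.2 zero_le_one)
  rw [one_smul, zero_smul, sub_zero] at h10
  norm_num at h10
  rw [gf_one hs, gf_zero hs, gdf_zero hs hε φ x y hy0] at h10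
  have heq : ker s ε φ (x - y) - lin s ε φ x y - ker s ε φ ((0:F) - y)
      = ker s ε φ (x - y) - ker s ε φ ((0:F) - y) - lin s ε φ x y := by abel
  rw [heq] at h10
  exact h10

/-! ### Continuity and bounds for the integrands -/

theorem rpow_inv_mul {s ε : ℝ} (hε : 0 < ε) : (ε^(s+1))⁻¹ * ε = ε^(-s) := by
  have h := Real.rpow_add hε (-(s+1)) 1
  rw [Real.rpow_one] at h
  rw [← Real.rpow_neg hε.le, ← h]
  norm_num

theorem ker_continuous {s ε : ℝ} (hs : 0 < s) (hε : 0 < ε) {φ : ℝ → ℝ}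
    (hφ : ContDiffOn ℝ 2 φ (Ioi 0)) (hφ1 : ∀ t ∈ Icc (0:ℝ) 1, φ t = t ^ ((s+1)/2)) :
    Continuous (fun v : F => ker s ε φ v) := by
  rw [continuous_iff_continuousAt]
  intro v
  rcases eq_or_ne v 0 with rfl | hv
  · have hev : (fun w : F => (ε^(s+1))⁻¹ • w) =ᶠ[nhds (0:F)] (fun w : F => ker s ε φ w) := by
      refine eventually_of_mem (Metric.ball_mem_nhds 0 hε) (fun w hw => ?_)
      have : ‖w‖ ≤ ε := by
        have := mem_ball_iff_norm.1 hw
        simpa using this.le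
      exact (ker_small hs hε hφ1 w this).symm
    exact ContinuousAt.congr (continuous_const.smul continuous_id).continuousAt hev
  · have hnv : 0 < ‖v‖ := norm_pos_iff.2 hv
    have hupos : 0 < ‖v‖^2/ε^2 := by positivity
    have hu : ContinuousAt (fun w : F => ‖w‖^2/ε^2) v :=
      ((continuous_norm.pow 2).div_const (ε^2)).continuousAt
    have hφu : ContinuousAt (fun w : F => φ (‖w‖^2/ε^2)) v :=
      ContinuousAt.comp (g := φ) (f := fun w : F => ‖w‖^2/ε^2)
        (hφ.continuousOn.continuousAt (Ioi_mem_nhds hupos)) hu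
    have hrp : ContinuousAt (fun w : F => (‖w‖^(s+1))⁻¹) v := by
      have h1 : ContinuousAt (fun w : F => ‖w‖^(s+1)) v :=
        (Real.continuousAt_rpow_const _ _ (Or.inl hnv.ne')).comp continuous_norm.continuousAt
      exact h1.inv₀ (ne_of_gt (Real.rpow_pos_of_pos hnv _))
    exact hφu.smul (hrp.smul continuousAt_id)

theorem ker_bound {s ε : ℝ} (hs : 0 < s) (hε : 0 < ε) {C : ℝ} (hC : 0 < C) {φ : ℝ → ℝ}
    (hφ1 : ∀ t ∈ Icc (0:ℝ) 1, φ t = t ^ ((s+1)/2)) (hφC : ∀ t : ℝ, |φ t| ≤ C) (v : F) :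
    ‖ker s ε φ v‖ ≤ (max C 1) * ε^(-s) := by
  have hεs : (0:ℝ) < ε^(s+1) := Real.rpow_pos_of_pos hε _
  by_cases hv : ‖v‖ ≤ ε
  · rw [ker_small hs hε hφ1 v hv, norm_smul, Real.norm_eq_abs,
      abs_of_nonneg (by positivity : (0:ℝ) ≤ (ε^(s+1))⁻¹)]
    calc (ε^(s+1))⁻¹ * ‖v‖ ≤ (ε^(s+1))⁻¹ * ε := by
          exact mul_le_mul_of_nonneg_left hv (by positivity)
      _ = ε^(-s) := rpow_inv_mul hε
      _ ≤ (max C 1) * ε^(-s) := by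
          have h1 : (0:ℝ) < ε^(-s) := Real.rpow_pos_of_pos hε _
          nlinarith [le_max_right C 1]
  · push_neg at hv
    have hnv : 0 < ‖v‖ := lt_trans hε hv
    have hvs : (0:ℝ) < ‖v‖^(s+1) := Real.rpow_pos_of_pos hnv _
    rw [ker, norm_smul, norm_smul, Real.norm_eq_abs, Real.norm_eq_abs,
      abs_of_nonneg (by positivity : (0:ℝ) ≤ (‖v‖^(s+1))⁻¹)]
    calc |φ (‖v‖^2/ε^2)| * ((‖v‖^(s+1))⁻¹ * ‖v‖)
        ≤ C * ((‖v‖^(s+1))⁻¹ * ‖v‖) := by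
          refine mul_le_mul_of_nonneg_right (hφC _) (by positivity)
      _ = C * ‖v‖^(-s) := by rw [rpow_inv_mul hnv]
      _ ≤ C * ε^(-s) := by
          refine mul_le_mul_of_nonneg_left ?_ hC.le
          exact Real.rpow_le_rpow_of_nonpos hε hv.le (by linarith)
      _ ≤ (max C 1) * ε^(-s) := by
          have h1 : (0:ℝ) < ε^(-s) := Real.rpow_pos_of_pos hε _
          nlinarith [le_max_left C 1]

theorem lin_continuousOn {s ε : ℝ} (hε : 0 < ε) {φ : ℝ → ℝ}
    (hφ : ContDiffOn ℝ 2 φ (Ioi 0)) (x : F) :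
    ContinuousOn (fun y : F => lin s ε φ x y) ({(0:F)}ᶜ) := by
  intro y hy
  have hy0 : y ≠ 0 := hy
  have hny : 0 < ‖y‖ := norm_pos_iff.2 hy0
  have hupos : 0 < ‖y‖^2/ε^2 := by positivity
  have hu : ContinuousAt (fun y : F => ‖y‖^2/ε^2) y :=
    ((continuous_norm.pow 2).div_const (ε^2)).continuousAt
  have hφu : ContinuousAt (fun y : F => φ (‖y‖^2/ε^2)) y :=
    ContinuousAt.comp (g := φ) (f := fun y : F => ‖y‖^2/ε^2)
      (hφ.continuousOn.continuousAt (Ioi_mem_nhds hupos)) hu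
  have hdφu : ContinuousAt (fun y : F => deriv φ (‖y‖^2/ε^2)) y :=
    ContinuousAt.comp (g := deriv φ) (f := fun y : F => ‖y‖^2/ε^2)
      ((dphi_continuousOn hφ).continuousAt (Ioi_mem_nhds hupos)) hu
  have hinner : ContinuousAt (fun y : F => (⟪x,y⟫ : ℝ)) y :=
    (continuous_const.inner continuous_id).continuousAt
  have hrp : ContinuousAt (fun y : F => (‖y‖^(s+1))⁻¹) y := by
    have h1 : ContinuousAt (fun y : F => ‖y‖^(s+1)) y :=
      (Real.continuousAt_rpow_const _ _ (Or.inl hny.ne')).comp continuous_norm.continuousAt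
    exact h1.inv₀ (ne_of_gt (Real.rpow_pos_of_pos hny _))
  have hsq : ContinuousAt (fun y : F => ((s+1)*⟪x,y⟫/‖y‖^2 : ℝ)) y :=
    (continuousAt_const.mul hinner).div ((continuous_norm.pow 2).continuousAt)
      (by positivity)
  have hfin : ContinuousAt (fun y : F => (‖y‖^(s+1))⁻¹ •
      (φ (‖y‖^2/ε^2) • (x - ((s+1)*⟪x,y⟫/‖y‖^2) • y)
        + (deriv φ (‖y‖^2/ε^2) * (2*⟪x,y⟫/ε^2)) • y)) y :=
    hrp.smul ((hφu.smul (continuousAt_const.sub (hsq.smul continuousAt_id))).add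
      ((hdφu.mul ((continuousAt_const.mul hinner).div_const (ε^2))).smul continuousAt_id))
  exact hfin.continuousWithinAt

end TaylorAux

open TaylorAux in
/-- Taylor lemma: the increment `R^s_{φ,ε}μ(x) − R^s_{φ,ε}μ(0)` equals the linearization
`T^ε(x)` up to an error bounded by `C₁ θ^s(3ε) |x|²/ε²`. -/
theorem taylor_lemma_error_bound (m : ℕ) (s ρ C Cρ : ℝ)
    (hs : 0 < s) (hρ : 0 < ρ) (hρ' : ρ < 1 / 2) (hC : 0 < C) (hCρ : 0 < Cρ) :
    ∃ C₁ : ℝ, 0 < C₁ ∧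
      ∀ (μ : Measure (EuclideanSpace ℝ (Fin m))), IsFiniteMeasure μ →
        ∀ (θ r₀ ε : ℝ) (φ : ℝ → ℝ),
        0 < θ → 0 < r₀ → 0 < ε →
        (∀ t : ℝ, 0 < t → t ≤ r₀ →
          μ (ball (0 : EuclideanSpace ℝ (Fin m)) t) ≤ ENNReal.ofReal (2 * θ * t ^ s)) →
        ContDiffOn ℝ 2 φ (Ioi 0) →
        (∀ t ∈ Icc (0 : ℝ) 1, φ t = t ^ ((s + 1) / 2)) →
        (∀ t : ℝ, 3 < t → φ t = 0) →
        (∀ t : ℝ, |φ t| ≤ C) →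
        (∀ t : ℝ, |deriv φ t| ≤ 1 / ρ) →
        (∀ t : ℝ, |deriv (deriv φ) t| ≤ Cρ) →
        ∀ x : EuclideanSpace ℝ (Fin m), ‖x‖ < ε / 4 →
          ‖((∫ y, φ (‖x - y‖ ^ 2 / ε ^ 2) • ((‖x - y‖ ^ (s + 1))⁻¹ • (x - y)) ∂μ)
              - ∫ y, φ (‖(0 : EuclideanSpace ℝ (Fin m)) - y‖ ^ 2 / ε ^ 2) •
                  ((‖(0 : EuclideanSpace ℝ (Fin m)) - y‖ ^ (s + 1))⁻¹ •
                    ((0 : EuclideanSpace ℝ (Fin m)) - y)) ∂μ)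
            - ∫ y, (‖y‖ ^ (s + 1))⁻¹ •
                (φ (‖y‖ ^ 2 / ε ^ 2) •
                    (x - ((s + 1) * (inner ℝ x y : ℝ) / ‖y‖ ^ 2) • y)
                  + (deriv φ (‖y‖ ^ 2 / ε ^ 2) * (2 * (inner ℝ x y : ℝ) / ε ^ 2)) • y) ∂μ‖
            ≤ C₁ * ((μ (ball (0 : EuclideanSpace ℝ (Fin m)) (3 * ε))).toReal
                / (3 * ε) ^ s) * ‖x‖ ^ 2 / ε ^ 2 := by
  classical
  have h3pow : (0:ℝ) < (3:ℝ)^(s:ℝ) := Real.rpow_pos_of_pos (by norm_num) _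
  refine ⟨Kc s ρ C Cρ * (3:ℝ)^(s:ℝ), ?_, ?_⟩
  · have hKc := Kc_pos (s := s) hs hρ hC hCρ
    positivity
  intro μ hfin θ r₀ ε φ hθ hr₀ hε hgrowth hφ hφ1 hφ3 hφC hφ' hφ'' x hx
  have hKc : 0 < Kc s ρ C Cρ := Kc_pos hs hρ hC hCρ
  have hPpos : (0:ℝ) < ε^(-(s+2)) := Real.rpow_pos_of_pos hε _
  set M := Kc s ρ C Cρ * ‖x‖^2 * ε^(-(s+2)) with hM
  have hM0 : 0 ≤ M := by positivity
  -- μ has no atom at 0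
  have hμ0 : μ {(0 : EuclideanSpace ℝ (Fin m))} = 0 := by
    refine le_antisymm ?_ zero_le
    have hcont : Filter.Tendsto (fun t : ℝ => ENNReal.ofReal (2*θ*t^s))
        (nhdsWithin 0 (Ioi 0)) (nhds 0) := by
      have c1 : ContinuousAt (fun t : ℝ => t^s) 0 :=
        Real.continuousAt_rpow_const 0 s (Or.inr hs.le)
      have c2 : ContinuousAt (fun t : ℝ => ENNReal.ofReal (2*θ*t^s)) 0 :=
        ContinuousAt.comp (g := ENNReal.ofReal)
          ENNReal.continuous_ofReal.continuousAt (continuousAt_const.mul c1)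
      have h0 : ENNReal.ofReal (2*θ*(0:ℝ)^s) = 0 := by
        simp [Real.zero_rpow hs.ne']
      have h1 := c2.tendsto
      rw [h0] at h1
      exact h1.mono_left nhdsWithin_le_nhds
    refine ge_of_tendsto hcont ?_
    refine eventually_of_mem (Ioc_mem_nhdsGT_of_mem ⟨le_rfl, lt_min hr₀ zero_lt_one⟩)
      (fun t ht => ?_)
    refine le_trans (measure_mono ?_) (hgrowth t ht.1 (le_trans ht.2 (min_le_left _ _)))
    intro z hz
    simp only [mem_singleton_iff] at hz
    subst hz
    simpa [mem_ball] using ht.1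
  have hae0 : ∀ᵐ y ∂μ, y ≠ (0 : EuclideanSpace ℝ (Fin m)) := by
    rw [MeasureTheory.ae_iff]; simpa using hμ0
  -- integrability of the three integrands
  have hmeas1 : Continuous (fun y : EuclideanSpace ℝ (Fin m) => ker s ε φ (x - y)) :=
    (ker_continuous hs hε hφ hφ1).comp (continuous_const.sub continuous_id)
  have hbd1 : ∀ y : EuclideanSpace ℝ (Fin m), ‖ker s ε φ (x - y)‖ ≤ (max C 1) * ε^(-s) :=
    fun y => ker_bound hs hε hC hφ1 hφC _
  have hint1 : Integrable (fun y : EuclideanSpace ℝ (Fin m) => ker s ε φ (x - y)) μ :=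
    (integrable_const _).mono' hmeas1.aestronglyMeasurable (ae_of_all _ hbd1)
  have hmeas2 : Continuous (fun y : EuclideanSpace ℝ (Fin m) =>
      ker s ε φ ((0 : EuclideanSpace ℝ (Fin m)) - y)) :=
    (ker_continuous hs hε hφ hφ1).comp (continuous_const.sub continuous_id)
  have hbd2 : ∀ y : EuclideanSpace ℝ (Fin m),
      ‖ker s ε φ ((0 : EuclideanSpace ℝ (Fin m)) - y)‖ ≤ (max C 1) * ε^(-s) :=
    fun y => ker_bound hs hε hC hφ1 hφC _
  have hint2 : Integrable (fun y : EuclideanSpace ℝ (Fin m) =>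
      ker s ε φ ((0 : EuclideanSpace ℝ (Fin m)) - y)) μ :=
    (integrable_const _).mono' hmeas2.aestronglyMeasurable (ae_of_all _ hbd2)
  have hmeas3 : AEStronglyMeasurable (fun y : EuclideanSpace ℝ (Fin m) => lin s ε φ x y) μ := by
    have h := (lin_continuousOn (s := s) hε hφ x).aestronglyMeasurable
      (μ := μ)
      (measurableSet_singleton (0 : EuclideanSpace ℝ (Fin m))).compl
    have hres : μ.restrict ({(0 : EuclideanSpace ℝ (Fin m))}ᶜ) = μ := by
      refine Measure.restrict_eq_self_of_ae_mem ?_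
      rw [MeasureTheory.ae_iff]
      simpa using hμ0
    exact hres ▸ h
  -- pointwise bound
  have hpt : ∀ y : EuclideanSpace ℝ (Fin m), y ≠ 0 →
      ‖ker s ε φ (x - y) - ker s ε φ ((0 : EuclideanSpace ℝ (Fin m)) - y) - lin s ε φ x y‖
        ≤ (ball (0 : EuclideanSpace ℝ (Fin m)) (3*ε)).indicator (fun _ => M) y := by
    intro y hy0
    by_cases hsmall : ‖y‖ ≤ ε/2
    · have hyB : y ∈ ball (0 : EuclideanSpace ℝ (Fin m)) (3*ε) := by
        rw [mem_ball, dist_zero_right]; linarith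
      rw [Set.indicator_of_mem hyB]
      have e1 : ker s ε φ (x - y) = (ε^(s+1))⁻¹ • (x - y) := by
        refine ker_small hs hε hφ1 _ ?_
        calc ‖x - y‖ ≤ ‖x‖ + ‖y‖ := norm_sub_le _ _
          _ ≤ ε := by linarith
      have e2 : ker s ε φ ((0 : EuclideanSpace ℝ (Fin m)) - y)
          = (ε^(s+1))⁻¹ • ((0 : EuclideanSpace ℝ (Fin m)) - y) := by
        refine ker_small hs hε hφ1 _ ?_
        rw [zero_sub, norm_neg]; linarith
      have e3 : lin s ε φ x y = (ε^(s+1))⁻¹ • x := lin_small hs hε hφ1 x y hy0 hsmall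
      rw [e1, e2, e3]
      have heq : (ε^(s+1))⁻¹ • (x - y) - (ε^(s+1))⁻¹ • ((0 : EuclideanSpace ℝ (Fin m)) - y)
          - (ε^(s+1))⁻¹ • x = 0 := by
        module
      rw [heq, norm_zero]
      exact hM0
    · push_neg at hsmall
      by_cases hbig : 3*ε ≤ ‖y‖
      · have e1 : ker s ε φ (x - y) = 0 := by
          refine ker_big hε hφ3 _ ?_
          have h1 : ‖y‖ - ‖x‖ ≤ ‖x - y‖ := by
            rw [norm_sub_rev]; exact norm_sub_norm_le _ _
          nlinarith [norm_nonneg x, norm_nonneg (x - y)]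
        have e2 : ker s ε φ ((0 : EuclideanSpace ℝ (Fin m)) - y) = 0 := by
          refine ker_big hε hφ3 _ ?_
          rw [zero_sub, norm_neg]
          nlinarith
        have e3 : lin s ε φ x y = 0 := lin_big hε hφ3 x y (by nlinarith)
        rw [e1, e2, e3]
        simpa using Set.indicator_nonneg (fun _ _ => hM0) y
      · push_neg at hbig
        have hyB : y ∈ ball (0 : EuclideanSpace ℝ (Fin m)) (3*ε) := by
          rw [mem_ball, dist_zero_right]; exact hbig
        rw [Set.indicator_of_mem hyB]
        exact key hs hρ hC hCρ hε hφ hφC hφ' hφ'' hφ3 x y hx hsmall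
  -- integrability of lin
  have hbd3 : ∀ᵐ y ∂μ, ‖lin s ε φ x y‖ ≤ M + ((max C 1) * ε^(-s) + (max C 1) * ε^(-s)) := by
    filter_upwards [hae0] with y hy
    have h := hpt y hy
    have hind : (ball (0 : EuclideanSpace ℝ (Fin m)) (3*ε)).indicator (fun _ => M) y ≤ M := by
      by_cases hyB : y ∈ ball (0 : EuclideanSpace ℝ (Fin m)) (3*ε)
      · rw [Set.indicator_of_mem hyB]
      · rw [Set.indicator_of_notMem hyB]; exact hM0
    have heq : lin s ε φ x y = (ker s ε φ (x - y) - ker s ε φ ((0 : EuclideanSpace ℝ (Fin m)) - y))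
        - (ker s ε φ (x - y) - ker s ε φ ((0 : EuclideanSpace ℝ (Fin m)) - y) - lin s ε φ x y) := by
      abel
    calc ‖lin s ε φ x y‖
        = ‖(ker s ε φ (x - y) - ker s ε φ ((0 : EuclideanSpace ℝ (Fin m)) - y))
            - (ker s ε φ (x - y) - ker s ε φ ((0 : EuclideanSpace ℝ (Fin m)) - y)
              - lin s ε φ x y)‖ := congrArg norm heq
      _ ≤ ‖ker s ε φ (x - y) - ker s ε φ ((0 : EuclideanSpace ℝ (Fin m)) - y)‖
          + ‖ker s ε φ (x - y) - ker s ε φ ((0 : EuclideanSpace ℝ (Fin m)) - y) - lin s ε φ x y‖ :=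
          norm_sub_le _ _
      _ ≤ (‖ker s ε φ (x - y)‖ + ‖ker s ε φ ((0 : EuclideanSpace ℝ (Fin m)) - y)‖) + M :=
          add_le_add (norm_sub_le _ _) (h.trans hind)
      _ ≤ M + ((max C 1) * ε^(-s) + (max C 1) * ε^(-s)) := by
          have := hbd1 y; have := hbd2 y; linarith
  have hint3 : Integrable (fun y : EuclideanSpace ℝ (Fin m) => lin s ε φ x y) μ :=
    (integrable_const _).mono' hmeas3 hbd3
  -- rewrite the goal
  show ‖((∫ y, ker s ε φ (x - y) ∂μ)
      - ∫ y, ker s ε φ ((0 : EuclideanSpace ℝ (Fin m)) - y) ∂μ)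
      - ∫ y, lin s ε φ x y ∂μ‖
    ≤ Kc s ρ C Cρ * (3:ℝ)^(s:ℝ)
        * ((μ (ball (0 : EuclideanSpace ℝ (Fin m)) (3 * ε))).toReal / (3 * ε) ^ s)
        * ‖x‖ ^ 2 / ε ^ 2
  have hsplit : ((∫ y, ker s ε φ (x - y) ∂μ)
        - ∫ y, ker s ε φ ((0 : EuclideanSpace ℝ (Fin m)) - y) ∂μ)
        - ∫ y, lin s ε φ x y ∂μ
      = ∫ y, (ker s ε φ (x - y) - ker s ε φ ((0 : EuclideanSpace ℝ (Fin m)) - y)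
          - lin s ε φ x y) ∂μ := by
    have hint12 : Integrable (fun y : EuclideanSpace ℝ (Fin m) =>
        ker s ε φ (x - y) - ker s ε φ ((0 : EuclideanSpace ℝ (Fin m)) - y)) μ :=
      hint1.sub hint2
    rw [integral_sub hint12 hint3, integral_sub hint1 hint2]
  rw [hsplit]
  have hgind : Integrable ((ball (0 : EuclideanSpace ℝ (Fin m)) (3*ε)).indicator
      (fun _ => M)) μ := (integrable_const M).indicator measurableSet_ball
  have hnorm := norm_integral_le_of_norm_le hgind
    (by filter_upwards [hae0] with y hy using hpt y hy)
  refine le_trans hnorm ?_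
  rw [integral_indicator_const _ measurableSet_ball]
  -- final computation
  have h3s : ((3*ε):ℝ)^s = (3:ℝ)^(s:ℝ) * ε^s := Real.mul_rpow (by norm_num) hε.le
  have h2ε : ε^((2:ℝ)) = ε^(2:ℕ) := by
    rw [show ((2:ℝ)) = ((2:ℕ):ℝ) by norm_num, Real.rpow_natCast]
  have hεs : ε^(-(s+2)) = ((ε^s) * ε^(2:ℕ))⁻¹ := by
    rw [Real.rpow_neg hε.le, Real.rpow_add hε, h2ε]
  have hεspos : (0:ℝ) < ε^s := Real.rpow_pos_of_pos hε _
  rw [smul_eq_mul, hM, hεs]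
  rw [h3s]
  have hT : (0:ℝ) ≤ (μ (ball (0 : EuclideanSpace ℝ (Fin m)) (3*ε))).toReal :=
    ENNReal.toReal_nonneg
  field_simp [h3pow.ne']
  rw [measureReal_def]
  exact le_of_eq (by ring)
end
end

section
/- Uniform Cauchy estimate on F_δ: let μ be a finite Borel measure on ℝ^m with μ(B(x,r)) ≤ M r^s for all x ∈ F_δ and r > 0, and let F_δ be a set of points x such that |R^s_{φ,ε}μ(x) − R^s_{φ,ε'}μ(x)| ≤ δ for all ε, ε' ≤ ε₀. If k_{φ,η} is Lipschitz with constant C(ρ)/η^{s+1} and supported in B(0,3η), then for any x₀ ∈ ℝ^m, r > 0 with ε ≤ ε₀ and η := r/δ ≤ ε₀, and any x, z ∈ B(x₀, r) ∩ F_δ, one has |R^s_{φ,ε}μ(x) − R^s_{φ,ε}μ(z)| ≤ C₆ δ, where C₆ depends only on ρ, s, m, M. -/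
open MeasureTheory Metric Set Filter

/-- The smoothed Riesz kernel `k_{φ,η}(u) = φ(|u|²/η²) u/|u|^{s+1}`. -/
noncomputable def smoothedRieszKernel (m : ℕ) (s : ℝ) (φ : ℝ → ℝ) (η : ℝ)
    (u : EuclideanSpace ℝ (Fin m)) : EuclideanSpace ℝ (Fin m) :=
  φ (‖u‖ ^ 2 / η ^ 2) • ((‖u‖ ^ (s + 1))⁻¹ • u)

/-- The smoothly truncated Riesz transform `R^s_{φ,η}μ(x) = ∫ k_{φ,η}(x−y) dμ(y)`. -/
noncomputable def smoothedRieszTransform (m : ℕ) (s : ℝ) (φ : ℝ → ℝ) (η : ℝ)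
    (μ : Measure (EuclideanSpace ℝ (Fin m))) (x : EuclideanSpace ℝ (Fin m)) :
    EuclideanSpace ℝ (Fin m) :=
  ∫ y, smoothedRieszKernel m s φ η (x - y) ∂μ

lemma smoothedRieszKernel_zero (m : ℕ) (s : ℝ) (φ : ℝ → ℝ) (η : ℝ) :
    smoothedRieszKernel m s φ η 0 = 0 := by
  simp [smoothedRieszKernel]

/-- Uniform Cauchy estimate on `F_δ`: any two points of `B(x₀,r) ∩ F_δ` have smoothed
Riesz transforms at scale `ε` differing by at most `C₆ δ`. -/
theorem cauchy_estimate_on_Fdelta (s ρ M CL : ℝ)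
    (hs : 0 < s) (hρ : 0 < ρ) (hM : 0 < M) (hCL : 0 < CL) :
    ∃ C₆ : ℝ, 0 < C₆ ∧
      ∀ (m : ℕ) (μ : Measure (EuclideanSpace ℝ (Fin m))), IsFiniteMeasure μ →
        ∀ (φ : ℝ → ℝ) (δ ε₀ : ℝ) (Fδ : Set (EuclideanSpace ℝ (Fin m)))
          (x₀ : EuclideanSpace ℝ (Fin m)) (r ε : ℝ),
        0 < δ → δ < 1 / 4 → 0 < ε₀ → 0 < r → 0 < ε → ε ≤ ε₀ → r / δ ≤ ε₀ →
        (∀ x ∈ Fδ, ∀ t : ℝ, 0 < t →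
          μ (ball x t) ≤ ENNReal.ofReal (M * t ^ s)) →
        (∀ x ∈ Fδ, ∀ e e' : ℝ, 0 < e → e ≤ ε₀ → 0 < e' → e' ≤ ε₀ →
          ‖smoothedRieszTransform m s φ e μ x - smoothedRieszTransform m s φ e' μ x‖ ≤ δ) →
        (∀ η : ℝ, 0 < η →
          LipschitzWith (Real.toNNReal (CL / η ^ (s + 1)))
            (smoothedRieszKernel m s φ η) ∧
          ∀ u : EuclideanSpace ℝ (Fin m), 3 * η < ‖u‖ →
            smoothedRieszKernel m s φ η u = 0) →
        ∀ x ∈ ball x₀ r ∩ Fδ, ∀ z ∈ ball x₀ r ∩ Fδ,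
          ‖smoothedRieszTransform m s φ ε μ x - smoothedRieszTransform m s φ ε μ z‖
            ≤ C₆ * δ := by
  refine ⟨2 + 2 * 5 ^ s * CL * M, by positivity, ?_⟩
  intro m μ hμfin φ δ ε₀ Fδ x₀ r ε hδ hδ4 hε₀ hr hε hεε₀ hηε₀ hgrowth hcauchy hker
    x hx z hz
  obtain ⟨hxB, hxF⟩ := hx
  obtain ⟨hzB, hzF⟩ := hz
  set η : ℝ := r / δ with hη_def
  have hη : 0 < η := div_pos hr hδ
  obtain ⟨hlip, hsupp⟩ := hker η hη
  have hηpow : 0 < η ^ (s + 1) := Real.rpow_pos_of_pos hη _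
  set L : ℝ := CL / η ^ (s + 1) with hL_def
  have hL : 0 < L := div_pos hCL hηpow
  have hLcoe : ((Real.toNNReal L : NNReal) : ℝ) = L := Real.coe_toNNReal _ hL.le
  -- Lipschitz estimate for the kernel in real form
  have hlipR : ∀ u v : EuclideanSpace ℝ (Fin m),
      ‖smoothedRieszKernel m s φ η u - smoothedRieszKernel m s φ η v‖ ≤ L * ‖u - v‖ := by
    intro u v
    have := hlip.dist_le_mul u v
    rwa [dist_eq_norm, dist_eq_norm, hLcoe] at this
  -- Integrability of the kernel shifted by any point
  have hcont : Continuous (smoothedRieszKernel m s φ η) := hlip.continuous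
  have hint : ∀ w : EuclideanSpace ℝ (Fin m),
      Integrable (fun y => smoothedRieszKernel m s φ η (w - y)) μ := by
    intro w
    refine (integrable_const (L * (3 * η))).mono'
      ((hcont.comp (continuous_const.sub continuous_id)).aestronglyMeasurable) ?_
    filter_upwards with y
    by_cases h : ‖w - y‖ ≤ 3 * η
    · calc ‖smoothedRieszKernel m s φ η (w - y)‖
          = ‖smoothedRieszKernel m s φ η (w - y) - smoothedRieszKernel m s φ η 0‖ := by
            rw [smoothedRieszKernel_zero, sub_zero]
        _ ≤ L * ‖(w - y) - 0‖ := hlipR _ _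
        _ ≤ L * (3 * η) := by rw [sub_zero]; exact mul_le_mul_of_nonneg_left h hL.le
    · simp [hsupp _ (not_le.mp h), mul_nonneg hL.le (by positivity : (0:ℝ) ≤ 3 * η)]
  -- distance between x and z
  have hr_eq : r = δ * η := by rw [hη_def]; field_simp
  have hxz : ‖x - z‖ ≤ 2 * r := by
    have h1 : dist x x₀ < r := mem_ball.mp hxB
    have h2 : dist z x₀ < r := mem_ball.mp hzB
    have h3 : dist x z ≤ dist x x₀ + dist z x₀ := dist_triangle_right _ _ _
    have h4 : dist x z ≤ 2 * r := by linarith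
    simpa [dist_eq_norm] using h4
  have hxz2 : ‖x - z‖ ≤ η / 2 := by
    have : 2 * r ≤ η / 2 := by rw [hr_eq]; nlinarith
    linarith
  -- the difference kernel and its support
  set g : EuclideanSpace ℝ (Fin m) → EuclideanSpace ℝ (Fin m) :=
    fun y => smoothedRieszKernel m s φ η (x - y) - smoothedRieszKernel m s φ η (z - y)
    with hg_def
  have hgbound : ∀ y, ‖g y‖ ≤ L * ‖x - z‖ := by
    intro y
    have := hlipR (x - y) (z - y)
    simpa [hg_def, sub_sub_sub_cancel_right] using this
  have hg0 : ∀ y ∉ closedBall x (4 * η), g y = 0 := by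
    intro y hy
    rw [mem_closedBall, not_le, dist_eq_norm, norm_sub_rev] at hy
    have h1 : 3 * η < ‖x - y‖ := by linarith
    have h2 : 3 * η < ‖z - y‖ := by
      have : ‖x - y‖ ≤ ‖x - z‖ + ‖z - y‖ := by
        have := norm_add_le (x - z) (z - y)
        simpa [sub_add_sub_cancel] using this
      linarith
    simp [hg_def, hsupp _ h1, hsupp _ h2]
  -- middle estimate at scale η
  have hmid : ‖smoothedRieszTransform m s φ η μ x - smoothedRieszTransform m s φ η μ z‖
      ≤ 2 * 5 ^ s * CL * M * δ := by
    have hsub : smoothedRieszTransform m s φ η μ x - smoothedRieszTransform m s φ η μ z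
        = ∫ y, g y ∂μ := by
      rw [smoothedRieszTransform, smoothedRieszTransform, ← integral_sub (hint x) (hint z)]
    have hind : ∫ y, g y ∂μ = ∫ y in closedBall x (4 * η), g y ∂μ := by
      rw [← integral_indicator measurableSet_closedBall]
      congr 1
      funext y
      by_cases hy : y ∈ closedBall x (4 * η)
      · rw [indicator_of_mem hy]
      · rw [indicator_of_notMem hy, hg0 y hy]
    have hmeas : μ (closedBall x (4 * η)) < ⊤ := measure_lt_top μ _
    have hnorm : ‖∫ y in closedBall x (4 * η), g y ∂μ‖
        ≤ (L * ‖x - z‖) * (μ (closedBall x (4 * η))).toReal :=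
      norm_setIntegral_le_of_norm_le_const hmeas
        fun y _ => hgbound y
    have hμball : (μ (closedBall x (4 * η))).toReal ≤ M * (5 * η) ^ s := by
      have hsubset : closedBall x (4 * η) ⊆ ball x (5 * η) :=
        closedBall_subset_ball (by linarith)
      have h1 : μ (closedBall x (4 * η)) ≤ ENNReal.ofReal (M * (5 * η) ^ s) :=
        (measure_mono hsubset).trans (hgrowth x hxF (5 * η) (by linarith))
      exact ENNReal.toReal_le_of_le_ofReal (by positivity) h1
    have hfinal : (L * ‖x - z‖) * (μ (closedBall x (4 * η))).toReal
        ≤ 2 * 5 ^ s * CL * M * δ := by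
      have h1 : (L * ‖x - z‖) * (μ (closedBall x (4 * η))).toReal
          ≤ (L * (2 * (δ * η))) * (M * (5 * η) ^ s) := by
        apply mul_le_mul
        · apply mul_le_mul_of_nonneg_left _ hL.le
          rw [← hr_eq]; exact hxz
        · exact hμball
        · exact ENNReal.toReal_nonneg
        · positivity
      have h2 : (L * (2 * (δ * η))) * (M * (5 * η) ^ s) = 2 * 5 ^ s * CL * M * δ := by
        have hrpow : (5 * η) ^ s = 5 ^ s * η ^ s :=
          Real.mul_rpow (by norm_num) hη.le
        have hpowadd : η ^ (s + 1) = η ^ s * η := by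
          rw [Real.rpow_add hη, Real.rpow_one]
        have hηs : (0:ℝ) < η ^ s := Real.rpow_pos_of_pos hη _
        rw [hL_def, hrpow, hpowadd]
        field_simp
      calc (L * ‖x - z‖) * (μ (closedBall x (4 * η))).toReal
          ≤ (L * (2 * (δ * η))) * (M * (5 * η) ^ s) := h1
        _ = 2 * 5 ^ s * CL * M * δ := h2
    rw [hsub, hind]
    exact hnorm.trans hfinal
  -- Cauchy estimates
  have hcx : ‖smoothedRieszTransform m s φ ε μ x - smoothedRieszTransform m s φ η μ x‖ ≤ δ :=
    hcauchy x hxF ε η hε hεε₀ hη hηε₀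
  have hcz : ‖smoothedRieszTransform m s φ η μ z - smoothedRieszTransform m s φ ε μ z‖ ≤ δ :=
    hcauchy z hzF η ε hη hηε₀ hε hεε₀
  calc ‖smoothedRieszTransform m s φ ε μ x - smoothedRieszTransform m s φ ε μ z‖
      ≤ ‖smoothedRieszTransform m s φ ε μ x - smoothedRieszTransform m s φ η μ x‖
        + ‖smoothedRieszTransform m s φ η μ x - smoothedRieszTransform m s φ η μ z‖
        + ‖smoothedRieszTransform m s φ η μ z - smoothedRieszTransform m s φ ε μ z‖ := by
        have := norm_add₃_le (a := smoothedRieszTransform m s φ ε μ x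
            - smoothedRieszTransform m s φ η μ x)
          (b := smoothedRieszTransform m s φ η μ x - smoothedRieszTransform m s φ η μ z)
          (c := smoothedRieszTransform m s φ η μ z - smoothedRieszTransform m s φ ε μ z)
        simpa using this
    _ ≤ δ + 2 * 5 ^ s * CL * M * δ + δ := by
        gcongr
    _ = (2 + 2 * 5 ^ s * CL * M) * δ := by ring
end
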